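/- Let S be a decision rule system with n(S) > 0 and let S′ = R_AD(S). Then max{d(S′), β_EAD(S′)} ≤ h_EAD(S) ≤ d(S′)·β_EAD⁺(S′). -/

import Mathlib

/- Common formal framework for decision rule systems and decision trees /
   acyclic decision graphs, following Durdymyradov & Moshkov. -/

attribute [local instance] Classical.propDecidable

noncomputable section

namespace DRS

/-- A decision rule `(a_{i₁}=δ₁) ∧ ⋯ ∧ (a_{i_m}=δ_m) → σ`:
`K` is the finite set of equations (attribute index, value), `rhs` is σ. -/
structure Rule where
  K : Finset (ℕ × ℕ)
  rhs : ℕ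

/-- Well-formedness of a rule: the attributes on its left-hand side are pairwise different. -/
def Rule.WF (r : Rule) : Prop := ∀ p ∈ r.K, ∀ q ∈ r.K, p.1 = q.1 → p = q

/-- A(r): the set of attributes of a rule. -/
def Rule.attrs (r : Rule) : Finset ℕ := r.K.image Prod.fst

/-- The length m of a rule. -/
def Rule.len (r : Rule) : ℕ := r.K.card

/-- A(S) -/
def attrs (S : Finset Rule) : Finset ℕ := S.biUnion Rule.attrs

/-- n(S) -/
def nPar (S : Finset Rule) : ℕ := (attrs S).card

/-- d(S): the maximum length of a rule of S. -/
def dPar (S : Finset Rule) : ℕ := S.sup Rule.len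

/-- D(S): the set of right-hand sides. -/
def rhsSet (S : Finset Rule) : Finset ℕ := S.image Rule.rhs

/-- V_S(a_i) -/
def VS (S : Finset Rule) (i : ℕ) : Finset ℕ :=
  ((S.biUnion Rule.K).filter fun p => p.1 = i).image Prod.snd

/-- k(S) -/
def kPar (S : Finset Rule) : ℕ := (attrs S).sup fun i => (VS S i).card

/-- Attribute values in trees are `Option ℕ`; `none` plays the role of the special value `*`.
`allowed S false i` is (the lift of) `V_S(a_i)`, and `allowed S true i` is `EV_S(a_i)`. -/
def allowed (S : Finset Rule) (ext : Bool) (i : ℕ) : Finset (Option ℕ) :=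
  (VS S i).image some ∪ (if ext then {none} else ∅)

/-- Consistency of an equation system over ω ∪ {*}. -/
def ConsistentE (E : Finset (ℕ × Option ℕ)) : Prop :=
  ∀ p ∈ E, ∀ q ∈ E, p.1 = q.1 → p.2 = q.2

/-- Lift the left-hand side of a rule to an equation system over ω ∪ {*}. -/
def liftK (K : Finset (ℕ × ℕ)) : Finset (ℕ × Option ℕ) :=
  K.image fun p => (p.1, some p.2)

/-- A finite directed labeled graph: the nodes are `0, …, n-1`, with a distinguished root,
each node carries either an attribute (working node) or a set of rules (terminal node),
and edges are labeled with elements of ω ∪ {*}. -/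
structure DGraph where
  n : ℕ
  root : ℕ
  label : ℕ → ℕ ⊕ Finset Rule
  edges : Finset (ℕ × Option ℕ × ℕ)

namespace DGraph

def step (G : DGraph) (u v : ℕ) : Prop := ∃ l, (u, l, v) ∈ G.edges

/-- The graph has no directed cycles. -/
def Acyclic (G : DGraph) : Prop := ∀ v, ¬ Relation.TransGen G.step v v

/-- A node is terminal if no edge leaves it. -/
def IsTerminal (G : DGraph) (v : ℕ) : Prop := ∀ e ∈ G.edges, e.1 ≠ v

/-- The set of rules attached to a (terminal) node. -/
def termSet (G : DGraph) (v : ℕ) : Finset Rule :=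
  Sum.elim (fun _ => (∅ : Finset Rule)) id (G.label v)

/-- `G` is an acyclic decision graph over the rule system `S`;
`ext = false` : branching over `V_S` (o-type), `ext = true` : branching over `EV_S` (e-type).
Terminal nodes are labeled with subsets of S; each working node is labeled with an
attribute `a` of `A(S)` and has exactly one leaving edge for every element of
`V_S(a)` (resp. `EV_S(a)`), the edges leaving it being labeled with these
pairwise different elements. -/
def IsDG (G : DGraph) (S : Finset Rule) (ext : Bool) : Prop :=
  G.root < G.n ∧
  (∀ e ∈ G.edges, e.1 < G.n ∧ e.2.2 < G.n) ∧
  G.Acyclic ∧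
  (∀ v < G.n,
    if G.IsTerminal v then
      ∃ Z : Finset Rule, G.label v = Sum.inr Z ∧ Z ⊆ S
    else
      ∃ a : ℕ, G.label v = Sum.inl a ∧ a ∈ attrs S ∧
        (∀ l : Option ℕ, (∃ w, (v, l, w) ∈ G.edges) ↔ l ∈ allowed S ext a) ∧
        (∀ l w w', (v, l, w) ∈ G.edges → (v, l, w') ∈ G.edges → w = w'))

/-- `G` is a finite directed tree with root: the root has no entering edge and every
other node has exactly one entering edge (together with acyclicity this makes the
graph a rooted tree). -/
def IsTree (G : DGraph) : Prop :=
  (∀ e ∈ G.edges, e.2.2 ≠ G.root) ∧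
  (∀ v < G.n, v ≠ G.root → ∃! e, e ∈ G.edges ∧ e.2.2 = v)

/-- `chainFrom G v p t`: the list `p` of (node, leaving-edge-label) pairs forms a
directed path in `G` starting at `v` and ending at `t`. -/
def chainFrom (G : DGraph) : ℕ → List (ℕ × Option ℕ) → ℕ → Prop
  | v, [], t => v = t
  | v, e :: rest, t => e.1 = v ∧ ∃ w, (v, e.2, w) ∈ G.edges ∧ chainFrom G w rest t

/-- A complete path: from the root to a terminal node; it is recorded by the list of
its working nodes with the labels of the edges taken, together with its terminal node. -/
def IsCompletePath (G : DGraph) (p : List (ℕ × Option ℕ)) (t : ℕ) : Prop :=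
  G.chainFrom G.root p t ∧ G.IsTerminal t ∧ t < G.n

/-- K(ξ): the equation system associated with a complete path. -/
def pathEqs (G : DGraph) (p : List (ℕ × Option ℕ)) : Finset (ℕ × Option ℕ) :=
  (p.filterMap fun e =>
    Sum.elim (fun a => some (a, e.2)) (fun _ => none) (G.label e.1)).toFinset

/-- L(Γ): the number of nodes. -/
def size (G : DGraph) : ℕ := G.n

/-- T(Γ): the number of terminal nodes labeled with pairwise different sets of rules. -/
def tCount (G : DGraph) : ℕ :=
  (((Finset.range G.n).filter fun v => G.IsTerminal v).image fun v => G.termSet v).card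

/-- h(Γ): the maximum number of working nodes on a complete path. -/
def depth (G : DGraph) : ℕ :=
  sSup {m | ∃ p t, G.IsCompletePath p t ∧ p.length = m}

/-- Path conditions for (the solutions of) the problems All Rules / EAll Rules. -/
def SolvesAR (G : DGraph) (S : Finset Rule) : Prop :=
  ∀ p t, G.IsCompletePath p t → ConsistentE (G.pathEqs p) →
    (∀ r ∈ G.termSet t, liftK r.K ⊆ G.pathEqs p) ∧
    (∀ r ∈ S, r ∉ G.termSet t → ¬ ConsistentE (liftK r.K ∪ G.pathEqs p))

/-- Path conditions for the problems All Decisions / EAll Decisions. -/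
def SolvesAD (G : DGraph) (S : Finset Rule) : Prop :=
  ∀ p t, G.IsCompletePath p t → ConsistentE (G.pathEqs p) →
    (∀ r ∈ G.termSet t, liftK r.K ⊆ G.pathEqs p) ∧
    (∀ r ∈ S, r ∉ G.termSet t → r.rhs ∉ (G.termSet t).image Rule.rhs →
      ¬ ConsistentE (liftK r.K ∪ G.pathEqs p))

/-- Path conditions for the problems Some Rules / ESome Rules. -/
def SolvesSR (G : DGraph) (S : Finset Rule) : Prop :=
  ∀ p t, G.IsCompletePath p t → ConsistentE (G.pathEqs p) →
    (∀ r ∈ G.termSet t, liftK r.K ⊆ G.pathEqs p) ∧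
    (G.termSet t = ∅ → ∀ r ∈ S, ¬ ConsistentE (liftK r.K ∪ G.pathEqs p))

end DGraph

/-- Γ is a decision tree over S solving AR(S) (an o-tree). -/
def TreeSolvesAR (S : Finset Rule) (G : DGraph) : Prop :=
  G.IsDG S false ∧ G.IsTree ∧ G.SolvesAR S
/-- Γ is a decision tree over S solving EAR(S) (an e-tree). -/
def TreeSolvesEAR (S : Finset Rule) (G : DGraph) : Prop :=
  G.IsDG S true ∧ G.IsTree ∧ G.SolvesAR S
/-- Γ is a decision tree over S solving AD(S) (an o-tree). -/
def TreeSolvesAD (S : Finset Rule) (G : DGraph) : Prop :=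
  G.IsDG S false ∧ G.IsTree ∧ G.SolvesAD S
/-- Γ is a decision tree over S solving EAD(S) (an e-tree). -/
def TreeSolvesEAD (S : Finset Rule) (G : DGraph) : Prop :=
  G.IsDG S true ∧ G.IsTree ∧ G.SolvesAD S
/-- Γ is a decision tree over S solving SR(S) (an o-tree). -/
def TreeSolvesSR (S : Finset Rule) (G : DGraph) : Prop :=
  G.IsDG S false ∧ G.IsTree ∧ G.SolvesSR S
/-- Γ is a decision tree over S solving ESR(S) (an e-tree). -/
def TreeSolvesESR (S : Finset Rule) (G : DGraph) : Prop :=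
  G.IsDG S true ∧ G.IsTree ∧ G.SolvesSR S

/-- L_AR(S): minimum number of nodes of a decision tree over S solving AR(S). -/
def L_AR (S : Finset Rule) : ℕ := sInf {m | ∃ G : DGraph, TreeSolvesAR S G ∧ G.size = m}
def L_EAR (S : Finset Rule) : ℕ := sInf {m | ∃ G : DGraph, TreeSolvesEAR S G ∧ G.size = m}
def L_AD (S : Finset Rule) : ℕ := sInf {m | ∃ G : DGraph, TreeSolvesAD S G ∧ G.size = m}
def L_EAD (S : Finset Rule) : ℕ := sInf {m | ∃ G : DGraph, TreeSolvesEAD S G ∧ G.size = m}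
def L_SR (S : Finset Rule) : ℕ := sInf {m | ∃ G : DGraph, TreeSolvesSR S G ∧ G.size = m}
def L_ESR (S : Finset Rule) : ℕ := sInf {m | ∃ G : DGraph, TreeSolvesESR S G ∧ G.size = m}

/-- T_AR(S): minimum number of differently-labeled terminal nodes of a decision tree
over S solving AR(S); similarly for the other problems. -/
def T_AR (S : Finset Rule) : ℕ := sInf {m | ∃ G : DGraph, TreeSolvesAR S G ∧ G.tCount = m}
def T_EAR (S : Finset Rule) : ℕ := sInf {m | ∃ G : DGraph, TreeSolvesEAR S G ∧ G.tCount = m}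
def T_AD (S : Finset Rule) : ℕ := sInf {m | ∃ G : DGraph, TreeSolvesAD S G ∧ G.tCount = m}
def T_EAD (S : Finset Rule) : ℕ := sInf {m | ∃ G : DGraph, TreeSolvesEAD S G ∧ G.tCount = m}
def T_SR (S : Finset Rule) : ℕ := sInf {m | ∃ G : DGraph, TreeSolvesSR S G ∧ G.tCount = m}
def T_ESR (S : Finset Rule) : ℕ := sInf {m | ∃ G : DGraph, TreeSolvesESR S G ∧ G.tCount = m}

/-- h_AR(S): minimum depth of a decision tree over S solving AR(S); similarly for the others. -/
def h_AR (S : Finset Rule) : ℕ := sInf {m | ∃ G : DGraph, TreeSolvesAR S G ∧ G.depth = m}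
def h_EAR (S : Finset Rule) : ℕ := sInf {m | ∃ G : DGraph, TreeSolvesEAR S G ∧ G.depth = m}
def h_AD (S : Finset Rule) : ℕ := sInf {m | ∃ G : DGraph, TreeSolvesAD S G ∧ G.depth = m}
def h_EAD (S : Finset Rule) : ℕ := sInf {m | ∃ G : DGraph, TreeSolvesEAD S G ∧ G.depth = m}
def h_SR (S : Finset Rule) : ℕ := sInf {m | ∃ G : DGraph, TreeSolvesSR S G ∧ G.depth = m}
def h_ESR (S : Finset Rule) : ℕ := sInf {m | ∃ G : DGraph, TreeSolvesESR S G ∧ G.depth = m}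

/-- L^DG_SR(S): minimum number of nodes of an acyclic decision graph solving SR(S). -/
def LDG_SR (S : Finset Rule) : ℕ :=
  sInf {m | ∃ G : DGraph, G.IsDG S false ∧ G.SolvesSR S ∧ G.size = m}
/-- L^DG_ESR(S): minimum number of nodes of an acyclic decision graph solving ESR(S). -/
def LDG_ESR (S : Finset Rule) : ℕ :=
  sInf {m | ∃ G : DGraph, G.IsDG S true ∧ G.SolvesSR S ∧ G.size = m}

/-- A node cover of the hypergraph G(S). -/
def IsNodeCover (S : Finset Rule) (B : Finset ℕ) : Prop :=
  B ⊆ attrs S ∧ ∀ r ∈ S, (Rule.attrs r).Nonempty → (Rule.attrs r ∩ B).Nonempty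

/-- β(S): the minimum cardinality of a node cover of the hypergraph G(S). -/
def beta (S : Finset Rule) : ℕ := sInf {c | ∃ B, IsNodeCover S B ∧ B.card = c}

/-- S⁺: the subsystem of S consisting of all rules of length d(S). -/
def Splus (S : Finset Rule) : Finset Rule := S.filter fun r => r.len = dPar S

/-- β⁺(S) = β(S⁺). -/
def betaPlus (S : Finset Rule) : ℕ := beta (Splus S)

/-- The rule r_α : delete from the left-hand side of r all equations belonging to α. -/
def Rule.restrict (r : Rule) (α : Finset (ℕ × Option ℕ)) : Rule :=
  ⟨r.K.filter fun p => (p.1, some p.2) ∉ α, r.rhs⟩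

/-- S_α : the system of the rules r_α for all r ∈ S with K(r) ∪ α consistent. -/
def restrict (S : Finset Rule) (α : Finset (ℕ × Option ℕ)) : Finset Rule :=
  (S.filter fun r => ConsistentE (liftK r.K ∪ α)).image fun r => r.restrict α

/-- E_C(S): consistent equation systems whose attributes are in A(S) and whose
values belong to V_S (ext = false) resp. EV_S (ext = true). -/
def ESys (S : Finset Rule) (ext : Bool) : Set (Finset (ℕ × Option ℕ)) :=
  {α | ConsistentE α ∧ ∀ p ∈ α, p.1 ∈ attrs S ∧ p.2 ∈ allowed S ext p.1}

/-- I_SR(S). -/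
def I_SR (S : Finset Rule) : Finset Rule :=
  if ∃ r ∈ S, r.len = 0 then S.filter fun r => r.len = 0 else S

/-- D₀(S): the right-hand sides of the rules of S of length 0. -/
def D0 (S : Finset Rule) : Finset ℕ := (S.filter fun r => r.len = 0).image Rule.rhs

/-- I_AD(S). -/
def I_AD (S : Finset Rule) : Finset Rule :=
  S.filter fun r => r.len = 0 ∨ r.rhs ∉ D0 S

def betaC (S : Finset Rule) (ext : Bool) : ℕ :=
  sSup {b | ∃ α ∈ ESys S ext, beta (restrict S α) = b}
def betaCplus (S : Finset Rule) (ext : Bool) : ℕ :=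
  sSup {b | ∃ α ∈ ESys S ext, betaPlus (restrict S α) = b}
def betaI (S : Finset Rule) (I : Finset Rule → Finset Rule) : ℕ :=
  sSup {b | ∃ α ∈ ESys S true, beta (I (restrict S α)) = b}
def betaIplus (S : Finset Rule) (I : Finset Rule → Finset Rule) : ℕ :=
  sSup {b | ∃ α ∈ ESys S true, betaPlus (I (restrict S α)) = b}

def beta_AR (S : Finset Rule) : ℕ := betaC S false
def beta_AD (S : Finset Rule) : ℕ := betaC S false
def beta_SR (S : Finset Rule) : ℕ := betaC S false
def beta_EAR (S : Finset Rule) : ℕ := betaC S true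
def beta_ARplus (S : Finset Rule) : ℕ := betaCplus S false
def beta_ADplus (S : Finset Rule) : ℕ := betaCplus S false
def beta_SRplus (S : Finset Rule) : ℕ := betaCplus S false
def beta_EARplus (S : Finset Rule) : ℕ := betaCplus S true
def beta_EAD (S : Finset Rule) : ℕ := betaI S I_AD
def beta_EADplus (S : Finset Rule) : ℕ := betaIplus S I_AD
def beta_ESR (S : Finset Rule) : ℕ := betaI S I_SR
def beta_ESRplus (S : Finset Rule) : ℕ := betaIplus S I_SR

/-- R_SR(S). -/
def R_SR (S : Finset Rule) : Finset Rule :=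
  S.filter fun r => ¬ ∃ r' ∈ S, r'.K ⊂ r.K

/-- R_AD(S). -/
def R_AD (S : Finset Rule) : Finset Rule :=
  S.filter fun r => ¬ ∃ r' ∈ S, r'.K ⊂ r.K ∧ r'.rhs = r.rhs

/-- A reduced decision rule system. -/
def Reduced (S : Finset Rule) : Prop :=
  attrs S ⊆ Finset.range (nPar S + 1) ∧
  rhsSet S ⊆ Finset.range ((rhsSet S).card + 1) ∧
  (∀ i ∈ attrs S, VS S i ⊆ Finset.range (kPar S + 1)) ∧
  1 ≤ dPar S

/-- Length of the binary representation of a natural number. -/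
def bitLen (m : ℕ) : ℕ := max 1 (Nat.size m)

/-- The length of the word "(a⟨i⟩=⟨δ⟩)" encoding one equation. -/
def eqLen (p : ℕ × ℕ) : ℕ := 4 + bitLen p.1 + bitLen p.2

/-- The length of the word encoding one rule (with the "∧" signs and "→"). -/
def Rule.wordLen (r : Rule) : ℕ :=
  (∑ p ∈ r.K, eqLen p) + (r.K.card - 1) + 1 + bitLen r.rhs

/-- size(S): the length of the word representing S (with ";" separating the rules). -/
def sizeS (S : Finset Rule) : ℕ := (∑ r ∈ S, r.wordLen) + (S.card - 1)
section Development
-- ### basic lemmas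

lemma consistentE_of_subset {A B : Finset (ℕ × Option ℕ)} (h : A ⊆ B)
    (hB : ConsistentE B) : ConsistentE A := fun p hp q hq => hB p (h hp) q (h hq)

lemma consistentE_union {A B : Finset (ℕ × Option ℕ)} (hA : ConsistentE A) (hB : ConsistentE B)
    (hAB : ∀ p ∈ A, ∀ q ∈ B, p.1 = q.1 → p.2 = q.2) : ConsistentE (A ∪ B) := by
  intro p hp q hq hpq
  rcases Finset.mem_union.1 hp with hp | hp <;> rcases Finset.mem_union.1 hq with hq | hq
  · exact hA p hp q hq hpq
  · exact hAB p hp q hq hpq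
  · exact (hAB q hq p hp hpq.symm).symm
  · exact hB p hp q hq hpq

lemma consistentE_empty : ConsistentE ∅ := by intro p hp; simp at hp

lemma mem_liftK {K : Finset (ℕ × ℕ)} {q : ℕ × Option ℕ} :
    q ∈ liftK K ↔ ∃ δ, (q.1, δ) ∈ K ∧ q.2 = some δ := by
  unfold liftK
  constructor
  · intro h
    rcases Finset.mem_image.1 h with ⟨p, hp, he⟩
    exact ⟨p.2, by simpa [← he] using hp, by simp [← he]⟩
  · rintro ⟨δ, h1, h2⟩
    exact Finset.mem_image.2 ⟨(q.1, δ), h1, by cases q with | _ a b => simp_all⟩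

lemma liftK_consistent {r : Rule} (h : r.WF) : ConsistentE (liftK r.K) := by
  intro p hp q hq hpq
  rcases mem_liftK.1 hp with ⟨δ, h1, h2⟩
  rcases mem_liftK.1 hq with ⟨δ', h1', h2'⟩
  have := h _ h1 _ h1' (by simpa using hpq)
  rw [h2, h2', show δ = δ' from congrArg Prod.snd this]

lemma liftK_mono {K K' : Finset (ℕ × ℕ)} (h : K ⊆ K') : liftK K ⊆ liftK K' :=
  Finset.image_subset_image h

lemma liftK_card {K : Finset (ℕ × ℕ)} : (liftK K).card = K.card :=
  Finset.card_image_of_injective _ (by intro p q h; simpa [Prod.ext_iff] using h)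

lemma VS_mono {S S' : Finset Rule} (h : S' ⊆ S) (i : ℕ) : VS S' i ⊆ VS S i := by
  unfold VS
  exact Finset.image_subset_image (Finset.filter_subset_filter _
    (Finset.biUnion_subset_biUnion_of_subset_left _ h))

lemma allowed_mono {S S' : Finset Rule} (h : S' ⊆ S) (i : ℕ) :
    allowed S' true i ⊆ allowed S true i := by
  unfold allowed
  exact Finset.union_subset_union (Finset.image_subset_image (VS_mono h i)) (by simp)

lemma none_mem_allowed (S : Finset Rule) (i : ℕ) : none ∈ allowed S true i := by
  simp [allowed]

lemma mem_VS_of_mem {S : Finset Rule} {r : Rule} (hr : r ∈ S) {a δ : ℕ} (h : (a, δ) ∈ r.K) :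
    δ ∈ VS S a := by
  unfold VS
  exact Finset.mem_image.2 ⟨(a, δ), Finset.mem_filter.2
    ⟨Finset.mem_biUnion.2 ⟨r, hr, h⟩, rfl⟩, rfl⟩

lemma attrs_mono {S S' : Finset Rule} (h : S' ⊆ S) : attrs S' ⊆ attrs S :=
  Finset.biUnion_subset_biUnion_of_subset_left _ h

lemma dPar_mono {S S' : Finset Rule} (h : S' ⊆ S) : dPar S' ≤ dPar S :=
  Finset.sup_mono h

lemma mem_attrs {S : Finset Rule} {a : ℕ} :
    a ∈ attrs S ↔ ∃ r ∈ S, a ∈ r.attrs := by simp [attrs]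


-- ### paths in graphs

lemma chainFrom_edges {G : DGraph} :
    ∀ {p : List (ℕ × Option ℕ)} {v u : ℕ}, G.chainFrom v p u →
      ∀ e ∈ p, ∃ w, (e.1, e.2, w) ∈ G.edges := by
  intro p
  induction p with
  | nil => intro v u h e he; simp at he
  | cons e' rest ih =>
    intro v u h e he
    obtain ⟨h1, w, hw, hrest⟩ := h
    rcases List.mem_cons.1 he with rfl | he
    · exact ⟨w, by rw [h1]; exact hw⟩
    · exact ih hrest e he

lemma chainFrom_reaches {G : DGraph} :
    ∀ {p : List (ℕ × Option ℕ)} {v u : ℕ}, G.chainFrom v p u →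
      ∀ x ∈ p.map Prod.fst, Relation.ReflTransGen G.step v x := by
  intro p
  induction p with
  | nil => intro v u h x hx; simp at hx
  | cons e' rest ih =>
    intro v u h x hx
    obtain ⟨h1, w, hw, hrest⟩ := h
    rcases List.mem_cons.1 hx with rfl | hx
    · rw [h1]
    · exact Relation.ReflTransGen.head ⟨e'.2, hw⟩ (ih hrest x hx)

lemma chainFrom_nodup {G : DGraph} (hac : G.Acyclic) :
    ∀ {p : List (ℕ × Option ℕ)} {v u : ℕ}, G.chainFrom v p u → (p.map Prod.fst).Nodup := by
  intro p
  induction p with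
  | nil => intro v u h; simp
  | cons e' rest ih =>
    intro v u h
    obtain ⟨h1, w, hw, hrest⟩ := h
    simp only [List.map_cons, List.nodup_cons]
    refine ⟨?_, ih hrest⟩
    intro hmem
    have hrtg : Relation.ReflTransGen G.step w e'.1 := chainFrom_reaches hrest _ hmem
    rw [h1] at hrtg
    exact hac v (Relation.TransGen.head' ⟨e'.2, hw⟩ hrtg)

lemma completePath_length_le {G : DGraph} {S : Finset Rule} {ext : Bool}
    (hDG : G.IsDG S ext) {p : List (ℕ × Option ℕ)} {t : ℕ}
    (hcp : G.IsCompletePath p t) : p.length ≤ G.n := by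
  obtain ⟨hchain, hterm, htn⟩ := hcp
  have hnd := chainFrom_nodup hDG.2.2.1 hchain
  have hsub : (p.map Prod.fst).toFinset ⊆ Finset.range G.n := by
    intro x hx
    rcases List.mem_map.1 (List.mem_toFinset.1 hx) with ⟨e, he, rfl⟩
    obtain ⟨w, hw⟩ := chainFrom_edges hchain e he
    exact Finset.mem_range.2 (hDG.2.1 _ hw).1
  calc p.length = (p.map Prod.fst).length := (List.length_map _).symm
    _ = (p.map Prod.fst).toFinset.card := (List.toFinset_card_of_nodup hnd).symm
    _ ≤ (Finset.range G.n).card := Finset.card_le_card hsub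
    _ = G.n := Finset.card_range _

lemma length_le_depth {G : DGraph} {S : Finset Rule} {ext : Bool}
    (hDG : G.IsDG S ext) {p : List (ℕ × Option ℕ)} {t : ℕ}
    (hcp : G.IsCompletePath p t) : p.length ≤ G.depth := by
  have hmem : p.length ∈ {m | ∃ p t, G.IsCompletePath p t ∧ p.length = m} := ⟨p, t, hcp, rfl⟩
  have hbdd : BddAbove {m | ∃ p t, G.IsCompletePath p t ∧ p.length = m} := by
    refine ⟨G.n, ?_⟩
    rintro m ⟨p', t', hcp', rfl⟩
    exact completePath_length_le hDG hcp'
  unfold DGraph.depth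
  exact le_csSup hbdd hmem

lemma pathEqs_nil {G : DGraph} : G.pathEqs [] = ∅ := rfl

lemma pathEqs_cons_inl {G : DGraph} {e : ℕ × Option ℕ} {p : List (ℕ × Option ℕ)} {a : ℕ}
    (h : G.label e.1 = Sum.inl a) :
    G.pathEqs (e :: p) = insert (a, e.2) (G.pathEqs p) := by
  simp [DGraph.pathEqs, h]

lemma mem_pathEqs {G : DGraph} {p : List (ℕ × Option ℕ)} {q : ℕ × Option ℕ} :
    q ∈ G.pathEqs p ↔ ∃ e ∈ p, G.label e.1 = Sum.inl q.1 ∧ e.2 = q.2 := by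
  unfold DGraph.pathEqs
  rw [List.mem_toFinset, List.mem_filterMap]
  constructor
  · rintro ⟨e, he, hq⟩
    cases hlab : G.label e.1 with
    | inl a =>
      rw [hlab] at hq; simp at hq
      subst hq
      exact ⟨e, he, by rw [hlab], rfl⟩
    | inr Z => rw [hlab] at hq; simp at hq
  · rintro ⟨e, he, hlab, hq2⟩
    refine ⟨e, he, ?_⟩
    rw [hlab]
    simp only [Sum.elim_inl, Option.some.injEq]
    rw [hq2]

lemma pathEqs_card_le {G : DGraph} {p : List (ℕ × Option ℕ)} :
    (G.pathEqs p).card ≤ p.length :=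
  le_trans (List.toFinset_card_le _) (List.length_filterMap_le _ _)

def reach (G : DGraph) (v : ℕ) : Finset ℕ :=
  (Finset.range G.n).filter fun w => Relation.ReflTransGen G.step v w

lemma exists_term_path (G : DGraph) (S : Finset Rule) (hDG : G.IsDG S true)
    (f : ℕ → Option ℕ) (hf : ∀ a ∈ attrs S, f a ∈ allowed S true a) :
    ∀ (k : ℕ) (v : ℕ), v < G.n → (reach G v).card ≤ k →
    ∃ p u, G.chainFrom v p u ∧ G.IsTerminal u ∧ u < G.n ∧
      ∀ q ∈ G.pathEqs p, q.2 = f q.1 := by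
  intro k
  induction k with
  | zero =>
    intro v hv hc
    have hvmem : v ∈ reach G v :=
      Finset.mem_filter.2 ⟨Finset.mem_range.2 hv, Relation.ReflTransGen.refl⟩
    have := Finset.card_pos.2 ⟨v, hvmem⟩
    omega
  | succ k ih =>
    intro v hv hc
    have hnode := hDG.2.2.2 v hv
    by_cases hterm : G.IsTerminal v
    · refine ⟨[], v, ?_, hterm, hv, by simp [pathEqs_nil]⟩
      show v = v
      rfl
    · rw [if_neg hterm] at hnode
      obtain ⟨a, hlab, hattr, hiff, huniq⟩ := hnode
      obtain ⟨w, hw⟩ := (hiff (f a)).2 (hf a hattr)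
      have hwn : w < G.n := (hDG.2.1 _ hw).2
      have hstep : G.step v w := ⟨f a, hw⟩
      have hsub : reach G w ⊆ reach G v := by
        intro x hx
        obtain ⟨hx1, hx2⟩ := Finset.mem_filter.1 hx
        exact Finset.mem_filter.2 ⟨hx1, Relation.ReflTransGen.head hstep hx2⟩
      have hvmem : v ∈ reach G v :=
        Finset.mem_filter.2 ⟨Finset.mem_range.2 hv, Relation.ReflTransGen.refl⟩
      have hvnot : v ∉ reach G w := by
        intro hvm
        exact hDG.2.2.1 v (Relation.TransGen.head' hstep (Finset.mem_filter.1 hvm).2)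
      have hlt : (reach G w).card < (reach G v).card :=
        Finset.card_lt_card ⟨hsub, fun hss => hvnot (hss hvmem)⟩
      obtain ⟨p, u, hch, hu, hun, hpe⟩ := ih w hwn (by omega)
      refine ⟨(v, f a) :: p, u, ⟨rfl, w, hw, hch⟩, hu, hun, ?_⟩
      intro q hq
      rw [pathEqs_cons_inl (by exact hlab)] at hq
      rcases Finset.mem_insert.1 hq with rfl | hq
      · rfl
      · exact hpe q hq

lemma exists_fpath (G : DGraph) (S : Finset Rule) (hDG : G.IsDG S true)
    (f : ℕ → Option ℕ) (hf : ∀ a ∈ attrs S, f a ∈ allowed S true a) :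
    ∃ p u, G.IsCompletePath p u ∧ (∀ q ∈ G.pathEqs p, q.2 = f q.1) ∧
      ConsistentE (G.pathEqs p) := by
  obtain ⟨p, u, h1, h2, h3, h4⟩ :=
    exists_term_path G S hDG f hf (reach G G.root).card G.root hDG.1 le_rfl
  exact ⟨p, u, ⟨h1, h2, h3⟩, h4, fun q hq q' hq' he => by rw [h4 q hq, h4 q' hq', he]⟩

lemma termSet_subset {G : DGraph} {S : Finset Rule} {ext : Bool} (hDG : G.IsDG S ext)
    {u : ℕ} (hu : G.IsTerminal u) (hun : u < G.n) : G.termSet u ⊆ S := by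
  have h := hDG.2.2.2 u hun
  rw [if_pos hu] at h
  obtain ⟨Z, hZ, hZS⟩ := h
  rw [show G.termSet u = Z by simp [DGraph.termSet, hZ]]
  exact hZS

lemma exists_RAD_le {S : Finset Rule} : ∀ r ∈ S, ∃ r' ∈ R_AD S, r'.K ⊆ r.K ∧ r'.rhs = r.rhs := by
  suffices h : ∀ (n : ℕ) (r : Rule), r ∈ S → r.K.card ≤ n →
      ∃ r' ∈ R_AD S, r'.K ⊆ r.K ∧ r'.rhs = r.rhs by
    intro r hr; exact h r.K.card r hr le_rfl
  intro n
  induction n using Nat.strong_induction_on with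
  | _ n ih =>
    intro r hr hcard
    by_cases h : ∃ r'' ∈ S, r''.K ⊂ r.K ∧ r''.rhs = r.rhs
    · obtain ⟨r'', hr''S, hss, hrhs⟩ := h
      have hlt : r''.K.card < r.K.card := Finset.card_lt_card hss
      obtain ⟨r', h1, h2, h3⟩ := ih r''.K.card (by omega) r'' hr''S le_rfl
      exact ⟨r', h1, h2.trans hss.subset, h3.trans hrhs⟩
    · exact ⟨r, Finset.mem_filter.2 ⟨hr, h⟩, subset_rfl, rfl⟩

-- ### lower bounds

lemma LB_d {S : Finset Rule} (hwf : ∀ r ∈ S, r.WF) {G : DGraph} (hG : TreeSolvesEAD S G) :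
    dPar (R_AD S) ≤ G.depth := by
  by_cases hd : dPar (R_AD S) = 0
  · omega
  have hne : (R_AD S).Nonempty := by
    rcases Finset.eq_empty_or_nonempty (R_AD S) with h | h
    · rw [h] at hd; simp [dPar] at hd
    · exact h
  obtain ⟨r, hrS', hrlen⟩ := Finset.exists_mem_eq_sup _ hne Rule.len
  have hrS : r ∈ S := Finset.filter_subset _ _ hrS'
  set f : ℕ → Option ℕ := fun a => if h : ∃ δ, (a, δ) ∈ r.K then some h.choose else none
    with hfdef
  have hfr : ∀ {a δ : ℕ}, (a, δ) ∈ r.K → f a = some δ := by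
    intro a δ h
    have hex : ∃ δ', (a, δ') ∈ r.K := ⟨δ, h⟩
    have heq := hwf r hrS _ hex.choose_spec _ h rfl
    simp only [hfdef, dif_pos hex]
    exact congrArg some (congrArg Prod.snd heq)
  have hfinv : ∀ {a δ : ℕ}, f a = some δ → (a, δ) ∈ r.K := by
    intro a δ h
    by_cases hex : ∃ δ', (a, δ') ∈ r.K
    · simp only [hfdef, dif_pos hex, Option.some.injEq] at h
      rw [← h]; exact hex.choose_spec
    · simp [hfdef, dif_neg hex] at h
  have hf : ∀ a ∈ attrs S, f a ∈ allowed S true a := by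
    intro a _
    by_cases h : ∃ δ, (a, δ) ∈ r.K
    · have hv := mem_VS_of_mem hrS h.choose_spec
      simp only [hfdef, dif_pos h, allowed]
      exact Finset.mem_union_left _ (Finset.mem_image.2 ⟨_, hv, rfl⟩)
    · simp only [hfdef, dif_neg h]
      exact none_mem_allowed S a
  obtain ⟨p, u, hcp, hpe, hcons⟩ := exists_fpath G S hG.1 f hf
  obtain ⟨h1, h2⟩ := hG.2.2 p u hcp hcons
  have hlen : r.K.card ≤ p.length → dPar (R_AD S) ≤ G.depth := by
    intro h
    calc dPar (R_AD S) = r.K.card := by unfold dPar; rw [hrlen]; rfl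
      _ ≤ p.length := h
      _ ≤ G.depth := length_le_depth hG.1 hcp
  by_cases hrt : r ∈ G.termSet u
  · apply hlen
    calc r.K.card = (liftK r.K).card := liftK_card.symm
      _ ≤ (G.pathEqs p).card := Finset.card_le_card (h1 r hrt)
      _ ≤ p.length := pathEqs_card_le
  by_cases hrr : r.rhs ∈ (G.termSet u).image Rule.rhs
  · obtain ⟨r'', hr''t, hr''rhs⟩ := Finset.mem_image.1 hrr
    have hsub : liftK r''.K ⊆ G.pathEqs p := h1 r'' hr''t
    have hKsub : r''.K ⊆ r.K := by
      intro q hq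
      have hmem : ((q.1, some q.2) : ℕ × Option ℕ) ∈ G.pathEqs p :=
        hsub (Finset.mem_image.2 ⟨q, hq, rfl⟩)
      have heq := hpe _ hmem
      simp only at heq
      have := hfinv heq.symm
      rwa [show ((q.1, q.2) : ℕ × ℕ) = q from rfl] at this
    have hr''S : r'' ∈ S := termSet_subset hG.1 hcp.2.1 hcp.2.2 hr''t
    by_cases heq : r''.K = r.K
    case neg =>
      exact absurd ⟨r'', hr''S, Finset.ssubset_iff_subset_ne.2 ⟨hKsub, heq⟩, hr''rhs⟩
        (Finset.mem_filter.1 hrS').2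
    case pos =>
      apply hlen
      rw [← heq]
      calc r''.K.card = (liftK r''.K).card := liftK_card.symm
        _ ≤ (G.pathEqs p).card := Finset.card_le_card hsub
        _ ≤ p.length := pathEqs_card_le
  · exfalso
    apply h2 r hrS hrt hrr
    refine consistentE_union (liftK_consistent (hwf r hrS)) hcons ?_
    intro q hq q' hq' hqq
    rcases mem_liftK.1 hq with ⟨δ, hδ, hq2⟩
    rw [hq2, hpe q' hq', ← hqq, hfr hδ]

lemma LB_beta {S : Finset Rule} (hwf : ∀ r ∈ S, r.WF) {G : DGraph} (hG : TreeSolvesEAD S G) :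
    beta_EAD (R_AD S) ≤ G.depth := by
  classical
  set S' := R_AD S with hS'
  have hsub' : S' ⊆ S := Finset.filter_subset _ _
  show sSup {b | ∃ α ∈ ESys S' true, beta (I_AD (restrict S' α)) = b} ≤ G.depth
  apply csSup_le
  · exact ⟨beta (I_AD (restrict S' ∅)), ∅, ⟨consistentE_empty, by simp⟩, rfl⟩
  rintro b ⟨α, ⟨hαc, hαd⟩, rfl⟩
  set T := I_AD (restrict S' α) with hT
  set f : ℕ → Option ℕ := fun a => if h : ∃ v, (a, v) ∈ α then h.choose else none with hfdef
  have hfα : ∀ {a : ℕ} {v : Option ℕ}, (a, v) ∈ α → f a = v := by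
    intro a v h
    have hex : ∃ v', (a, v') ∈ α := ⟨v, h⟩
    simp only [hfdef, dif_pos hex]
    exact hαc _ hex.choose_spec _ h rfl
  have hfinv : ∀ {a : ℕ} {δ : ℕ}, f a = some δ → (a, some δ) ∈ α := by
    intro a δ h
    by_cases hex : ∃ v, (a, v) ∈ α
    · simp only [hfdef, dif_pos hex] at h
      rw [← h]; exact hex.choose_spec
    · simp [hfdef, dif_neg hex] at h
  have hf : ∀ a ∈ attrs S, f a ∈ allowed S true a := by
    intro a _
    by_cases h : ∃ v, (a, v) ∈ α
    · have := (hαd _ h.choose_spec).2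
      simp only [hfdef, dif_pos h]
      exact allowed_mono hsub' a this
    · simp only [hfdef, dif_neg h]
      exact none_mem_allowed S a
  obtain ⟨p, u, hcp, hpe, hcons⟩ := exists_fpath G S hG.1 f hf
  obtain ⟨h1, h2⟩ := hG.2.2 p u hcp hcons
  set B := ((G.pathEqs p).image Prod.fst) ∩ attrs T with hB
  have hcover : IsNodeCover T B := by
    refine ⟨Finset.inter_subset_right, ?_⟩
    intro s hsT hsne
    by_contra hempty
    rw [Finset.not_nonempty_iff_eq_empty] at hempty
    obtain ⟨r, hrfil, hrs⟩ := Finset.mem_image.1 (Finset.mem_filter.1 hsT).1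
    obtain ⟨hrS', hrcons⟩ := Finset.mem_filter.1 hrfil
    have hrS : r ∈ S := hsub' hrS'
    have hattrT : s.attrs ⊆ attrs T := fun x hx => Finset.mem_biUnion.2 ⟨s, hsT, hx⟩
    have hnotB : ∀ x ∈ s.attrs, x ∉ (G.pathEqs p).image Prod.fst := by
      intro x hx hmem
      have : x ∈ s.attrs ∩ B := Finset.mem_inter.2 ⟨hx,
        Finset.mem_inter.2 ⟨hmem, hattrT hx⟩⟩
      rw [hempty] at this
      simp at this
    have hrule_cons : ConsistentE (liftK r.K ∪ G.pathEqs p) := by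
      refine consistentE_union (liftK_consistent (hwf r hrS)) hcons ?_
      intro q hq q' hq' hqq
      rcases mem_liftK.1 hq with ⟨δ, hδ, hq2⟩
      by_cases hin : (q.1, some δ) ∈ α
      · rw [hq2, hpe q' hq', ← hqq, hfα hin]
      · exfalso
        have hq1s : q.1 ∈ s.attrs := by
          rw [← hrs]
          unfold Rule.restrict Rule.attrs
          exact Finset.mem_image.2 ⟨(q.1, δ),
            Finset.mem_filter.2 ⟨hδ, by simpa using hin⟩, rfl⟩
        exact hnotB _ hq1s (Finset.mem_image.2 ⟨q', hq', hqq.symm⟩)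
    -- obtain a terminally matched rule with same rhs
    have hmatch : ∃ r'' ∈ G.termSet u, r''.rhs = r.rhs ∧ liftK r''.K ⊆ G.pathEqs p := by
      by_cases hrt : r ∈ G.termSet u
      · exact ⟨r, hrt, rfl, h1 r hrt⟩
      by_cases hrr : r.rhs ∈ (G.termSet u).image Rule.rhs
      · obtain ⟨r'', hr''t, hr''rhs⟩ := Finset.mem_image.1 hrr
        exact ⟨r'', hr''t, hr''rhs, h1 r'' hr''t⟩
      · exact absurd hrule_cons (h2 r hrS hrt hrr)
    obtain ⟨r'', hr''t, hr''rhs, hr''sub⟩ := hmatch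
    have hr''S : r'' ∈ S := termSet_subset hG.1 hcp.2.1 hcp.2.2 hr''t
    obtain ⟨r3, hr3S', hr3K, hr3rhs⟩ := exists_RAD_le r'' hr''S
    have hr3sub : liftK r3.K ⊆ α := by
      intro q hq
      have hqp : q ∈ G.pathEqs p := hr''sub (liftK_mono hr3K hq)
      obtain ⟨q1, q2⟩ := q
      rcases mem_liftK.1 hq with ⟨δ, hδ, hq2⟩
      simp only at hδ hq2
      have hthis := hpe _ hqp
      simp only at hthis
      subst hq2
      exact hfinv hthis.symm
    have hr3cons : ConsistentE (liftK r3.K ∪ α) := by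
      rw [Finset.union_eq_right.2 hr3sub]
      exact hαc
    have hr3len : (r3.restrict α).len = 0 := by
      unfold Rule.restrict Rule.len
      rw [Finset.card_eq_zero, Finset.filter_eq_empty_iff]
      intro q hq
      simp only [not_not]
      exact hr3sub (Finset.mem_image.2 ⟨q, hq, rfl⟩)
    have hr3mem : r3.restrict α ∈ restrict S' α :=
      Finset.mem_image.2 ⟨r3, Finset.mem_filter.2 ⟨hr3S', hr3cons⟩, rfl⟩
    have hD0 : s.rhs ∈ D0 (restrict S' α) := by
      unfold D0
      refine Finset.mem_image.2 ⟨r3.restrict α, Finset.mem_filter.2 ⟨hr3mem, hr3len⟩, ?_⟩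
      show r3.rhs = s.rhs
      rw [hr3rhs, hr''rhs, ← hrs]
      rfl
    have hslen : s.len ≠ 0 := by
      intro h0
      rw [Rule.len, Finset.card_eq_zero] at h0
      obtain ⟨x, hx⟩ := hsne
      rw [Rule.attrs, h0] at hx
      simp at hx
    have := (Finset.mem_filter.1 hsT).2
    rcases this with h | h
    · exact hslen h
    · exact h hD0
  calc beta T ≤ B.card := Nat.sInf_le ⟨B, hcover, rfl⟩
    _ ≤ ((G.pathEqs p).image Prod.fst).card := Finset.card_le_card Finset.inter_subset_left
    _ ≤ (G.pathEqs p).card := Finset.card_image_le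
    _ ≤ p.length := pathEqs_card_le
    _ ≤ G.depth := length_le_depth hG.1 hcp

-- ### abstract trees and compilation

inductive LTree where
  | leaf (Z : Finset Rule)
  | node (a : ℕ) (kids : List (Option ℕ × LTree))

mutual
def sz : LTree → ℕ
  | .leaf _ => 1
  | .node _ kids => 1 + szGo kids
def szGo : List (Option ℕ × LTree) → ℕ
  | [] => 0
  | (_, t) :: rest => sz t + szGo rest
end

mutual
def ht : LTree → ℕ
  | .leaf _ => 0
  | .node _ kids => 1 + htGo kids
def htGo : List (Option ℕ × LTree) → ℕ
  | [] => 0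
  | (_, t) :: rest => max (ht t) (htGo rest)
end

mutual
def labs : LTree → List (ℕ ⊕ Finset Rule)
  | .leaf Z => [Sum.inr Z]
  | .node a kids => Sum.inl a :: labsGo kids
def labsGo : List (Option ℕ × LTree) → List (ℕ ⊕ Finset Rule)
  | [] => []
  | (_, t) :: rest => labs t ++ labsGo rest
end

mutual
def edgs : LTree → ℕ → List (ℕ × Option ℕ × ℕ)
  | .leaf _, _ => []
  | .node _ kids, v => edgsGo v kids (v + 1)
def edgsGo : ℕ → List (Option ℕ × LTree) → ℕ → List (ℕ × Option ℕ × ℕ)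
  | _, [], _ => []
  | par, (l, t) :: rest, w => (par, l, w) :: (edgs t w ++ edgsGo par rest (w + sz t))
end

lemma sz_pos : ∀ t : LTree, 1 ≤ sz t
  | .leaf _ => le_refl _
  | .node _ _ => by simp [sz]

mutual
theorem labs_length : ∀ t : LTree, (labs t).length = sz t
  | .leaf Z => by simp [labs, sz]
  | .node a kids => by
    simp only [labs, sz, List.length_cons, labsGo_length kids]
    omega
theorem labsGo_length : ∀ kids : List (Option ℕ × LTree), (labsGo kids).length = szGo kids
  | [] => by simp [labsGo, szGo]
  | (l, t) :: rest => by
    simp only [labsGo, szGo, List.length_append, labs_length t, labsGo_length rest]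
end

mutual
theorem edgs_bounds : ∀ (t : LTree) (v : ℕ), ∀ e ∈ edgs t v,
    v ≤ e.1 ∧ e.1 < v + sz t ∧ v < e.2.2 ∧ e.2.2 < v + sz t ∧ e.1 < e.2.2
  | .leaf _, v => by intro e he; simp [edgs] at he
  | .node a kids, v => by
    intro e he
    simp only [edgs] at he
    have h := edgsGo_bounds kids v (v + 1) (by omega) e he
    obtain ⟨h1, h2, h3, h4⟩ := h
    simp only [sz]
    rcases h1 with h1 | h1 <;> omega
theorem edgsGo_bounds : ∀ (kids : List (Option ℕ × LTree)) (par w : ℕ), par < w →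
    ∀ e ∈ edgsGo par kids w,
    (e.1 = par ∨ (w ≤ e.1 ∧ e.1 < w + szGo kids)) ∧
      w ≤ e.2.2 ∧ e.2.2 < w + szGo kids ∧ e.1 < e.2.2
  | [], par, w => by intro h e he; simp [edgsGo] at he
  | (l, t) :: rest, par, w => by
    intro hpw e he
    simp only [edgsGo, List.mem_cons, List.mem_append] at he
    simp only [szGo]
    have hp1 := sz_pos t
    rcases he with rfl | he | he
    · refine ⟨Or.inl rfl, le_refl w, ?_, ?_⟩
      · show w < w + (sz t + szGo rest)
        omega
      · show par < w
        omega
    · obtain ⟨h1, h2, h3, h4, h5⟩ := edgs_bounds t w e he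
      omega
    · obtain ⟨h1, h2, h3, h4⟩ := edgsGo_bounds rest par (w + sz t) (by omega) e he
      rcases h1 with h1 | h1 <;> omega
end

mutual
theorem edgs_targets : ∀ (t : LTree) (v : ℕ),
    ((edgs t v).map (fun e => e.2.2)).Perm (List.range' (v + 1) (sz t - 1))
  | .leaf _, v => by simp [edgs, sz]
  | .node a kids, v => by
    have h := edgsGo_targets kids v (v + 1)
    simpa [edgs, sz] using h
theorem edgsGo_targets : ∀ (kids : List (Option ℕ × LTree)) (par w : ℕ),
    ((edgsGo par kids w).map (fun e => e.2.2)).Perm (List.range' w (szGo kids))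
  | [], par, w => by simp [edgsGo, szGo]
  | (l, t) :: rest, par, w => by
    have h1 := edgs_targets t w
    have h2 := edgsGo_targets rest par (w + sz t)
    have hp := sz_pos t
    simp only [edgsGo, szGo, List.map_cons, List.map_append]
    have hr : List.range' w (sz t + szGo rest) =
        w :: (List.range' (w + 1) (sz t - 1) ++ List.range' (w + sz t) (szGo rest)) := by
      rw [show sz t + szGo rest = (sz t - 1 + szGo rest) + 1 by omega]
      rw [List.range'_succ]
      rw [show w + sz t = (w + 1) + (sz t - 1) by omega, List.range'_append_1]
    rw [hr]
    exact List.Perm.cons w (List.Perm.append h1 h2)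
end

theorem edgsGo_head :
    ∀ (kids : List (Option ℕ × LTree)) (par w : ℕ), par < w →
    ∀ e ∈ edgsGo par kids w, e.1 = par →
    ∃ ll t' w', (ll, t') ∈ kids ∧ e = (par, ll, w') ∧ w ≤ w' ∧ w' + sz t' ≤ w + szGo kids ∧
      (∀ e' ∈ edgs t' w', e' ∈ edgsGo par kids w) ∧
      (∀ e' ∈ edgsGo par kids w, w' ≤ e'.1 → e'.1 < w' + sz t' → e' ∈ edgs t' w') ∧
      (∀ (u : ℕ) (d : ℕ ⊕ Finset Rule), w' ≤ u → u < w' + sz t' →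
        (labsGo kids).getD (u - w) d = (labs t').getD (u - w') d) := by
  intro kids
  induction kids with
  | nil => intro par w hpw e he; simp [edgsGo] at he
  | cons hd rest ih =>
    obtain ⟨l0, t0⟩ := hd
    intro par w hpw e he hep
    have hp0 := sz_pos t0
    simp only [edgsGo, List.mem_cons, List.mem_append] at he
    rcases he with rfl | he | he
    · refine ⟨l0, t0, w, List.mem_cons_self, rfl, le_refl w, ?_, ?_, ?_, ?_⟩
      · show w + sz t0 ≤ w + (sz t0 + szGo rest)
        omega
      · intro e' he'
        simp only [edgsGo, List.mem_cons, List.mem_append]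
        exact Or.inr (Or.inl he')
      · intro e' he' hw1 hw2
        simp only [edgsGo, List.mem_cons, List.mem_append] at he'
        rcases he' with rfl | he' | he'
        · exfalso
          revert hw1
          show ¬ (w ≤ par)
          omega
        · exact he'
        · obtain ⟨h1, h2, h3, h4⟩ := edgsGo_bounds rest par (w + sz t0) (by omega) e' he'
          rcases h1 with h1 | h1 <;> omega
      · intro u d hu1 hu2
        show (labs t0 ++ labsGo rest).getD (u - w) d = (labs t0).getD (u - w) d
        exact List.getD_append _ _ _ _ (by rw [labs_length]; omega)
    · exfalso
      obtain ⟨h1, h2, h3, h4, h5⟩ := edgs_bounds t0 w e he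
      omega
    · obtain ⟨ll, t', w', hmem, heq, hw1, hw2, hcont, hsand, hlab⟩ :=
        ih par (w + sz t0) (by omega) e he hep
      refine ⟨ll, t', w', List.mem_cons_of_mem _ hmem, heq, by omega, ?_, ?_, ?_, ?_⟩
      · show w' + sz t' ≤ w + (sz t0 + szGo rest)
        omega
      · intro e' he'
        simp only [edgsGo, List.mem_cons, List.mem_append]
        exact Or.inr (Or.inr (hcont e' he'))
      · intro e' he' hwa hwb
        simp only [edgsGo, List.mem_cons, List.mem_append] at he'
        rcases he' with rfl | he' | he'
        · exfalso
          revert hwa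
          show ¬ (w' ≤ par)
          omega
        · exfalso
          obtain ⟨h1, h2, h3, h4, h5⟩ := edgs_bounds t0 w e' he'
          omega
        · exact hsand e' he' hwa hwb
      · intro u d hu1 hu2
        show (labs t0 ++ labsGo rest).getD (u - w) d = (labs t').getD (u - w') d
        rw [List.getD_append_right _ _ _ _ (by rw [labs_length]; omega)]
        rw [labs_length]
        rw [show u - w - sz t0 = u - (w + sz t0) by omega]
        exact hlab u d hu1 hu2

theorem edgsGo_at :
    ∀ (kids : List (Option ℕ × LTree)) (par w : ℕ), par < w →
    ∀ u : ℕ, w ≤ u → u < w + szGo kids →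
    ∃ ll t' w', (ll, t') ∈ kids ∧ w' ≤ u ∧ u < w' + sz t' ∧ w ≤ w' ∧
      w' + sz t' ≤ w + szGo kids ∧
      (∀ e' ∈ edgs t' w', e' ∈ edgsGo par kids w) ∧
      (∀ e' ∈ edgsGo par kids w, w' ≤ e'.1 → e'.1 < w' + sz t' → e' ∈ edgs t' w') ∧
      (∀ (u' : ℕ) (d : ℕ ⊕ Finset Rule), w' ≤ u' → u' < w' + sz t' →
        (labsGo kids).getD (u' - w) d = (labs t').getD (u' - w') d) := by
  intro kids
  induction kids with
  | nil => intro par w hpw u hu1 hu2; simp [szGo] at hu2; omega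
  | cons hd rest ih =>
    obtain ⟨l0, t0⟩ := hd
    intro par w hpw u hu1 hu2
    have hp0 := sz_pos t0
    by_cases hcase : u < w + sz t0
    · refine ⟨l0, t0, w, List.mem_cons_self, hu1, hcase, le_refl w, ?_, ?_, ?_, ?_⟩
      · show w + sz t0 ≤ w + (sz t0 + szGo rest)
        omega
      · intro e' he'
        simp only [edgsGo, List.mem_cons, List.mem_append]
        exact Or.inr (Or.inl he')
      · intro e' he' hw1 hw2
        simp only [edgsGo, List.mem_cons, List.mem_append] at he'
        rcases he' with rfl | he' | he'
        · exfalso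
          revert hw1
          show ¬ (w ≤ par)
          omega
        · exact he'
        · obtain ⟨h1, h2, h3, h4⟩ := edgsGo_bounds rest par (w + sz t0) (by omega) e' he'
          rcases h1 with h1 | h1 <;> omega
      · intro u' d hu1' hu2'
        show (labs t0 ++ labsGo rest).getD (u' - w) d = (labs t0).getD (u' - w) d
        exact List.getD_append _ _ _ _ (by rw [labs_length]; omega)
    · have hu2' : u < (w + sz t0) + szGo rest := by
        simp only [szGo] at hu2
        omega
      obtain ⟨ll, t', w', hmem, hw1, hw2, hw3, hw4, hcont, hsand, hlab⟩ :=
        ih par (w + sz t0) (by omega) u (by omega) hu2'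
      refine ⟨ll, t', w', List.mem_cons_of_mem _ hmem, hw1, hw2, by omega, ?_, ?_, ?_, ?_⟩
      · show w' + sz t' ≤ w + (sz t0 + szGo rest)
        omega
      · intro e' he'
        simp only [edgsGo, List.mem_cons, List.mem_append]
        exact Or.inr (Or.inr (hcont e' he'))
      · intro e' he' hwa hwb
        simp only [edgsGo, List.mem_cons, List.mem_append] at he'
        rcases he' with rfl | he' | he'
        · exfalso
          revert hwa
          show ¬ (w' ≤ par)
          omega
        · exfalso
          obtain ⟨h1, h2, h3, h4, h5⟩ := edgs_bounds t0 w e' he'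
          omega
        · exact hsand e' he' hwa hwb
      · intro u' d hu1' hu2''
        show (labs t0 ++ labsGo rest).getD (u' - w) d = (labs t').getD (u' - w') d
        rw [List.getD_append_right _ _ _ _ (by rw [labs_length]; omega)]
        rw [labs_length]
        rw [show u' - w - sz t0 = u' - (w + sz t0) by omega]
        exact hlab u' d hu1' hu2''

theorem edgsGo_exists_head :
    ∀ (kids : List (Option ℕ × LTree)) (par w : ℕ), ∀ l ∈ kids.map Prod.fst,
    ∃ w'', (par, l, w'') ∈ edgsGo par kids w := by
  intro kids
  induction kids with
  | nil => intro par w l hl; simp at hl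
  | cons hd rest ih =>
    obtain ⟨l0, t0⟩ := hd
    intro par w l hl
    rcases List.mem_cons.1 hl with rfl | hl
    · exact ⟨w, List.mem_cons_self⟩
    · obtain ⟨w'', hw⟩ := ih par (w + sz t0) l hl
      exact ⟨w'', by simp only [edgsGo, List.mem_cons, List.mem_append]; exact Or.inr (Or.inr hw)⟩

theorem edgsGo_head_uniq :
    ∀ (kids : List (Option ℕ × LTree)) (par w : ℕ), par < w →
    (kids.map Prod.fst).Nodup →
    ∀ l w1 w2, (par, l, w1) ∈ edgsGo par kids w → (par, l, w2) ∈ edgsGo par kids w → w1 = w2 := by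
  intro kids
  induction kids with
  | nil => intro par w hpw hnd l w1 w2 h1; simp [edgsGo] at h1
  | cons hd rest ih =>
    obtain ⟨l0, t0⟩ := hd
    intro par w hpw hnd l w1 w2 h1 h2
    have hp0 := sz_pos t0
    simp only [List.map_cons, List.nodup_cons] at hnd
    have hnotrest : ∀ wx, (par, l0, wx) ∈ edgsGo par rest (w + sz t0) → False := by
      intro wx hwx
      obtain ⟨ll, t', w', hmem, heq, _⟩ := edgsGo_head rest par (w + sz t0) (by omega) _ hwx rfl
      have : ll = l0 := by
        have := congrArg (fun e => e.2.1) heq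
        simpa using this.symm
      exact hnd.1 (by rw [← this]; exact List.mem_map.2 ⟨(ll, t'), hmem, rfl⟩)
    have hsrc : ∀ wx, ((par, l, wx) : ℕ × Option ℕ × ℕ) ∈ edgs t0 w → False := by
      intro wx hwx
      obtain ⟨hb1, _⟩ := edgs_bounds t0 w _ hwx
      simp only at hb1
      omega
    simp only [edgsGo, List.mem_cons, List.mem_append] at h1 h2
    rcases h1 with h1 | h1 | h1 <;> rcases h2 with h2 | h2 | h2
    · rw [show w1 = w from congrArg (fun e => e.2.2) h1,
        show w2 = w from congrArg (fun e => e.2.2) h2]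
    · exact absurd h2 (hsrc w2)
    · exfalso
      have hl : l = l0 := by
        have := congrArg (fun e => e.2.1) h1
        simpa using this
      rw [hl] at h2
      exact hnotrest w2 h2
    · exact absurd h1 (hsrc w1)
    · exfalso
      obtain ⟨hb1, _⟩ := edgs_bounds t0 w _ h1
      simp only at hb1
      omega
    · exfalso
      obtain ⟨hb1, _⟩ := edgs_bounds t0 w _ h1
      simp only at hb1
      omega
    · exfalso
      have hl : l = l0 := by
        have := congrArg (fun e => e.2.1) h2
        simpa using this
      rw [hl] at h1
      exact hnotrest w1 h1
    · exfalso
      obtain ⟨hb1, _⟩ := edgs_bounds t0 w _ h2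
      simp only at hb1
      omega
    · exact ih par (w + sz t0) (by omega) hnd.2 l w1 w2 h1 h2

inductive WFT (S : Finset Rule) : LTree → Prop
  | leaf {Z : Finset Rule} : Z ⊆ S → WFT S (.leaf Z)
  | node {a : ℕ} {kids : List (Option ℕ × LTree)} :
      a ∈ attrs S → kids.map Prod.fst = (allowed S true a).toList →
      (∀ p ∈ kids, WFT S p.2) → WFT S (.node a kids)

def LeafCond (S Z : Finset Rule) (F : Finset (ℕ × Option ℕ)) : Prop :=
  (∀ r ∈ Z, liftK r.K ⊆ F) ∧
  ∀ r ∈ S, r ∉ Z → r.rhs ∉ Z.image Rule.rhs → ¬ ConsistentE (liftK r.K ∪ F)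

inductive Ok (S : Finset Rule) : LTree → Finset (ℕ × Option ℕ) → Prop
  | leaf {Z : Finset Rule} {E : Finset (ℕ × Option ℕ)} :
      (ConsistentE E → LeafCond S Z E) → Ok S (.leaf Z) E
  | node {a : ℕ} {kids : List (Option ℕ × LTree)} {E : Finset (ℕ × Option ℕ)} :
      (∀ p ∈ kids, Ok S p.2 (insert ((a : ℕ), p.1) E)) → Ok S (.node a kids) E

lemma ht_le_htGo : ∀ (kids : List (Option ℕ × LTree)) (p : Option ℕ × LTree),
    p ∈ kids → ht p.2 ≤ htGo kids := by
  intro kids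
  induction kids with
  | nil => simp
  | cons hd rest ih =>
    obtain ⟨l0, t0⟩ := hd
    intro p hp
    rcases List.mem_cons.1 hp with rfl | hp
    · simp only [htGo]
      exact le_max_left _ _
    · simp only [htGo]
      exact le_trans (ih p hp) (le_max_right _ _)

theorem struct_tree {S : Finset Rule} {t : LTree} (hW : WFT S t) :
    ∀ (v u : ℕ), v ≤ u → u < v + sz t →
    (∃ Z, (labs t).getD (u - v) (Sum.inr ∅) = Sum.inr Z ∧ Z ⊆ S ∧
      ∀ e ∈ edgs t v, e.1 ≠ u) ∨
    (∃ a, (labs t).getD (u - v) (Sum.inr ∅) = Sum.inl a ∧ a ∈ attrs S ∧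
      (∀ l, (∃ w, ((u, l, w) : ℕ × Option ℕ × ℕ) ∈ edgs t v) ↔ l ∈ allowed S true a) ∧
      (∀ l w w', ((u, l, w) : ℕ × Option ℕ × ℕ) ∈ edgs t v →
        ((u, l, w') : ℕ × Option ℕ × ℕ) ∈ edgs t v → w = w')) := by
  induction hW with
  | @leaf Z hZ =>
    intro v u h1 h2
    simp only [sz] at h2
    have hvu : u = v := by omega
    subst hvu
    left
    refine ⟨Z, by simp [labs, Nat.sub_self], hZ, ?_⟩
    intro e he
    simp [edgs] at he
  | @node a kids ha hfst hkids ih =>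
    intro v u h1 h2
    have hnd : (kids.map Prod.fst).Nodup := by rw [hfst]; exact Finset.nodup_toList _
    by_cases hu : u = v
    · subst hu
      right
      refine ⟨a, by simp [labs, Nat.sub_self], ha, ?_, ?_⟩
      · intro l
        constructor
        · rintro ⟨w, hw⟩
          simp only [edgs] at hw
          obtain ⟨ll, t', w', hmem, heq, _⟩ :=
            edgsGo_head kids u (u + 1) (by omega) _ hw rfl
          have hll : ll = l := by
            have := congrArg (fun x => x.2.1) heq
            simpa using this.symm
          rw [← Finset.mem_toList, ← hfst]
          exact List.mem_map.2 ⟨(ll, t'), hmem, by rw [hll]⟩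
        · intro hl
          rw [← Finset.mem_toList, ← hfst] at hl
          obtain ⟨w'', hw⟩ := edgsGo_exists_head kids u (u + 1) l hl
          exact ⟨w'', by simpa [edgs] using hw⟩
      · intro l w w' hwa hwb
        simp only [edgs] at hwa hwb
        exact edgsGo_head_uniq kids u (u + 1) (by omega) hnd l w w' hwa hwb
    · have hu1 : v + 1 ≤ u := by omega
      have hu2 : u < (v + 1) + szGo kids := by
        simp only [sz] at h2
        omega
      obtain ⟨ll, t', w', hmem, hw1, hw2, hw3, hw4, hcont, hsand, hlab⟩ :=
        edgsGo_at kids v (v + 1) (by omega) u hu1 hu2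
      have hszn : sz (.node a kids) = 1 + szGo kids := by simp [sz]
      have hlabel : (labs (.node a kids)).getD (u - v) (Sum.inr ∅) =
          (labs t').getD (u - w') (Sum.inr ∅) := by
        show (Sum.inl a :: labsGo kids).getD (u - v) _ = _
        rw [show u - v = (u - (v + 1)) + 1 by omega, List.getD_cons_succ]
        exact hlab u _ hw1 hw2
      have hedge : ∀ (l : Option ℕ) (w : ℕ),
          ((u, l, w) : ℕ × Option ℕ × ℕ) ∈ edgs (.node a kids) v ↔
          ((u, l, w) : ℕ × Option ℕ × ℕ) ∈ edgs t' w' := by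
        intro l w
        constructor
        · intro h
          exact hsand _ (by simpa [edgs] using h) hw1 hw2
        · intro h
          simpa [edgs] using hcont _ h
      rcases ih (ll, t') hmem w' u hw1 hw2 with ⟨Z, hZ1, hZ2, hZ3⟩ | ⟨a', h1', h2', h3', h4'⟩
      · left
        refine ⟨Z, by rw [hlabel]; exact hZ1, hZ2, ?_⟩
        intro e he heu
        have he' : e ∈ edgs t' w' := by
          refine hsand e (by simpa [edgs] using he) ?_ ?_
          · rw [heu]; exact hw1
          · rw [heu]; exact hw2
        exact hZ3 e he' heu
      · right
        refine ⟨a', by rw [hlabel]; exact h1', h2', ?_, ?_⟩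
        · intro l
          rw [← h3' l]
          constructor
          · rintro ⟨w, hw⟩
            exact ⟨w, (hedge l w).1 hw⟩
          · rintro ⟨w, hw⟩
            exact ⟨w, (hedge l w).2 hw⟩
        · intro l w w'' hwa hwb
          exact h4' l w w'' ((hedge l w).1 hwa) ((hedge l w'').1 hwb)

theorem main_path {S : Finset Rule} (G : DGraph) {t : LTree} (hW : WFT S t) :
    ∀ (v : ℕ) (E : Finset (ℕ × Option ℕ)), Ok S t E →
    (∀ e ∈ edgs t v, e ∈ G.edges) →
    (∀ e ∈ G.edges, v ≤ e.1 → e.1 < v + sz t → e ∈ edgs t v) →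
    (∀ w, v ≤ w → w < v + sz t → G.label w = (labs t).getD (w - v) (Sum.inr ∅)) →
    ∀ p u, G.chainFrom v p u → G.IsTerminal u →
    p.length ≤ ht t ∧ ∃ Z, G.label u = Sum.inr Z ∧
      (ConsistentE (E ∪ G.pathEqs p) → LeafCond S Z (E ∪ G.pathEqs p)) := by
  induction hW with
  | @leaf Z hZ =>
    intro v E hOk h1 h2 h3 p u hch hterm
    cases hOk with
    | leaf hcond =>
      cases p with
      | nil =>
        have hvu : v = u := hch
        refine ⟨by simp [ht], Z, ?_, ?_⟩
        · rw [← hvu, h3 v (le_refl v) (by simp [sz])]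
          simp [labs, Nat.sub_self]
        · rw [pathEqs_nil, Finset.union_empty]
          exact hcond
      | cons e rest =>
        exfalso
        obtain ⟨he1, w, hw, hrest⟩ := hch
        have := h2 _ hw (le_refl v) (by simp [sz])
        simp [edgs] at this
  | @node a kids ha hfst hkids ih =>
    intro v E hOk h1 h2 h3 p u hch hterm
    cases hOk with
    | node hOkk =>
      have hszn : sz (.node a kids) = 1 + szGo kids := by simp [sz]
      have hlabv : G.label v = Sum.inl a := by
        rw [h3 v (le_refl v) (by omega)]
        simp [labs, Nat.sub_self]
      cases p with
      | nil =>
        exfalso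
        have hvu : v = u := hch
        have hnone : (none : Option ℕ) ∈ kids.map Prod.fst := by
          rw [hfst, Finset.mem_toList]
          exact none_mem_allowed S a
        obtain ⟨w'', hw⟩ := edgsGo_exists_head kids v (v + 1) none hnone
        have hmemE : ((v, none, w'') : ℕ × Option ℕ × ℕ) ∈ G.edges :=
          h1 _ (by simpa [edgs] using hw)
        exact hterm _ hmemE hvu
      | cons e rest =>
        obtain ⟨he1, w, hw, hrest⟩ := hch
        have hwe : ((v, e.2, w) : ℕ × Option ℕ × ℕ) ∈ edgs (.node a kids) v :=
          h2 _ hw (le_refl v) (by omega)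
        simp only [edgs] at hwe
        obtain ⟨ll, t', w', hmem, heq, hge, hle, hcont, hsand, hlab⟩ :=
          edgsGo_head kids v (v + 1) (by omega) _ hwe rfl
        have hll : ll = e.2 := by
          have := congrArg (fun x => x.2.1) heq
          simpa using this.symm
        have hww : w = w' := by
          have := congrArg (fun x => x.2.2) heq
          simpa using this
        subst hww
        have hOk' : Ok S t' (insert (a, e.2) E) := by
          have := hOkk (ll, t') hmem
          rwa [hll] at this
        have h1' : ∀ e' ∈ edgs t' w, e' ∈ G.edges := by
          intro e' he'
          exact h1 _ (by simpa [edgs] using hcont e' he')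
        have h2' : ∀ e' ∈ G.edges, w ≤ e'.1 → e'.1 < w + sz t' → e' ∈ edgs t' w := by
          intro e' he' hb1 hb2
          have hbig := h2 e' he' (by omega) (by omega)
          exact hsand e' (by simpa [edgs] using hbig) hb1 hb2
        have h3' : ∀ w'', w ≤ w'' → w'' < w + sz t' →
            G.label w'' = (labs t').getD (w'' - w) (Sum.inr ∅) := by
          intro w'' hb1 hb2
          rw [h3 w'' (by omega) (by omega)]
          show (Sum.inl a :: labsGo kids).getD (w'' - v) _ = _
          rw [show w'' - v = (w'' - (v + 1)) + 1 by omega, List.getD_cons_succ]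
          exact hlab w'' _ hb1 hb2
        obtain ⟨hlen, Z, hZl, hZc⟩ := ih (ll, t') hmem w (insert (a, e.2) E) hOk'
          h1' h2' h3' rest u hrest hterm
        refine ⟨?_, Z, hZl, ?_⟩
        · have hhh : ht t' ≤ htGo kids := ht_le_htGo kids (ll, t') hmem
          have hlen' : rest.length ≤ ht t' := hlen
          simp only [List.length_cons, ht]
          omega
        · have hlabe : G.label e.1 = Sum.inl a := by rw [he1]; exact hlabv
          rw [pathEqs_cons_inl hlabe]
          have hset : E ∪ insert (a, e.2) (G.pathEqs rest) =
              insert (a, e.2) E ∪ G.pathEqs rest := by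
            rw [Finset.union_insert, Finset.insert_union]
          rw [hset]
          exact hZc

def LGraph (t : LTree) : DGraph :=
  ⟨sz t, 0, fun v => (labs t).getD v (Sum.inr ∅), (edgs t 0).toFinset⟩

theorem LGraph_props (S : Finset Rule) (t : LTree) (hW : WFT S t) (hOk : Ok S t ∅) :
    TreeSolvesEAD S (LGraph t) ∧ (LGraph t).depth ≤ ht t := by
  set G := LGraph t with hGdef
  have hedge_iff : ∀ e, e ∈ G.edges ↔ e ∈ edgs t 0 := by
    intro e
    show e ∈ (edgs t 0).toFinset ↔ _
    exact List.mem_toFinset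
  have hbounds : ∀ e ∈ G.edges, e.1 < sz t ∧ 0 < e.2.2 ∧ e.2.2 < sz t ∧ e.1 < e.2.2 := by
    intro e he
    obtain ⟨b1, b2, b3, b4, b5⟩ := edgs_bounds t 0 e ((hedge_iff e).1 he)
    omega
  have hlabel : ∀ v, G.label v = (labs t).getD v (Sum.inr ∅) := fun v => rfl
  have hn : G.n = sz t := rfl
  have hroot : G.root = 0 := rfl
  have hacyc : G.Acyclic := by
    have key : ∀ x y : ℕ, Relation.TransGen G.step x y → x < y := by
      intro x y h
      induction h with
      | single hs =>
        obtain ⟨l, hl⟩ := hs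
        exact (hbounds _ hl).2.2.2
      | tail hxy hs ih =>
        obtain ⟨l, hl⟩ := hs
        exact lt_trans ih (hbounds _ hl).2.2.2
    intro v hv
    exact absurd (key v v hv) (lt_irrefl v)
  have hDG : G.IsDG S true := by
    refine ⟨by rw [hroot, hn]; exact sz_pos t, ?_, hacyc, ?_⟩
    · intro e he
      have := hbounds e he
      rw [hn]
      omega
    · intro v hv
      rw [hn] at hv
      rcases struct_tree hW 0 v (Nat.zero_le v) (by omega) with
        ⟨Z, hZ1, hZ2, hZ3⟩ | ⟨a, h1', h2', h3', h4'⟩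
      · have hterm : G.IsTerminal v := by
          intro e he
          exact hZ3 e ((hedge_iff e).1 he)
        rw [if_pos hterm]
        refine ⟨Z, ?_, hZ2⟩
        rw [hlabel v]
        rw [Nat.sub_zero] at hZ1
        exact hZ1
      · have hlabv : G.label v = Sum.inl a := by
          rw [hlabel v]
          rw [Nat.sub_zero] at h1'
          exact h1'
        have hnterm : ¬ G.IsTerminal v := by
          intro hterm
          obtain ⟨w, hw⟩ := (h3' none).2 (none_mem_allowed S a)
          exact hterm (v, none, w) ((hedge_iff _).2 hw) rfl
        rw [if_neg hnterm]
        refine ⟨a, hlabv, h2', ?_, ?_⟩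
        · intro l
          rw [← h3' l]
          constructor
          · rintro ⟨w, hw⟩
            exact ⟨w, (hedge_iff _).1 hw⟩
          · rintro ⟨w, hw⟩
            exact ⟨w, (hedge_iff _).2 hw⟩
        · intro l w w' hwa hwb
          exact h4' l w w' ((hedge_iff _).1 hwa) ((hedge_iff _).1 hwb)
  have hTree : G.IsTree := by
    constructor
    · intro e he
      rw [hroot]
      have := hbounds e he
      omega
    · intro v hv hvne
      rw [hn] at hv
      rw [hroot] at hvne
      have hperm := edgs_targets t 0
      have hmem : v ∈ List.range' (0 + 1) (sz t - 1) := by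
        rw [List.mem_range'_1]
        omega
      have hvmap : v ∈ (edgs t 0).map (fun e => e.2.2) := hperm.mem_iff.2 hmem
      obtain ⟨e, he, hev⟩ := List.mem_map.1 hvmap
      refine ⟨e, ⟨(hedge_iff e).2 he, hev⟩, ?_⟩
      rintro e' ⟨he', hev'⟩
      have hnd : ((edgs t 0).map (fun e => e.2.2)).Nodup :=
        hperm.nodup_iff.2 (List.nodup_range')
      exact List.inj_on_of_nodup_map hnd ((hedge_iff e').1 he') he (by rw [hev', hev])
  have hmp := main_path (S := S) G hW 0 ∅ hOk
    (fun e he => (hedge_iff e).2 he)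
    (fun e he _ _ => (hedge_iff e).1 he)
    (fun w _ _ => by rw [hlabel w, Nat.sub_zero])
  refine ⟨⟨hDG, hTree, ?_⟩, ?_⟩
  · intro p u hcp hcons
    obtain ⟨hchain, hterm, hun⟩ := hcp
    rw [hroot] at hchain
    obtain ⟨hlen, Z, hZl, hZc⟩ := hmp p u hchain hterm
    have htermZ : G.termSet u = Z := by simp [DGraph.termSet, hZl]
    rw [htermZ]
    have hcond := hZc (by rw [Finset.empty_union]; exact hcons)
    rw [Finset.empty_union] at hcond
    exact hcond
  · show sSup {m | ∃ p u, G.IsCompletePath p u ∧ p.length = m} ≤ ht t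
    apply csSup_le'
    rintro m ⟨p, u, hcp, rfl⟩
    obtain ⟨hchain, hterm, hun⟩ := hcp
    rw [hroot] at hchain
    exact (hmp p u hchain hterm).1

-- ### combinatorics of restrict / covers

lemma attrs_isNodeCover (T : Finset Rule) : IsNodeCover T (attrs T) := by
  refine ⟨subset_rfl, ?_⟩
  intro r hr hne
  obtain ⟨x, hx⟩ := hne
  exact ⟨x, Finset.mem_inter.2 ⟨hx, Finset.mem_biUnion.2 ⟨r, hr, hx⟩⟩⟩

lemma exists_minCover (T : Finset Rule) : ∃ B, IsNodeCover T B ∧ B.card = beta T := by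
  have hne : {c | ∃ B, IsNodeCover T B ∧ B.card = c}.Nonempty :=
    ⟨(attrs T).card, attrs T, attrs_isNodeCover T, rfl⟩
  exact Nat.sInf_mem hne

def minCover (T : Finset Rule) : Finset ℕ := (exists_minCover T).choose

lemma minCover_spec (T : Finset Rule) :
    IsNodeCover T (minCover T) ∧ (minCover T).card = beta T :=
  (exists_minCover T).choose_spec

lemma beta_le_card_attrs (T : Finset Rule) : beta T ≤ (attrs T).card :=
  Nat.sInf_le ⟨attrs T, attrs_isNodeCover T, rfl⟩

lemma attrs_restrict_subset (S' : Finset Rule) (α : Finset (ℕ × Option ℕ)) :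
    attrs (restrict S' α) ⊆ attrs S' := by
  intro x hx
  obtain ⟨s, hs, hxs⟩ := Finset.mem_biUnion.1 hx
  obtain ⟨r, hr, rfl⟩ := Finset.mem_image.1 hs
  refine Finset.mem_biUnion.2 ⟨r, (Finset.mem_filter.1 hr).1, ?_⟩
  simp only [Rule.attrs, Rule.restrict] at hxs ⊢
  obtain ⟨q, hq, rfl⟩ := Finset.mem_image.1 hxs
  exact Finset.mem_image.2 ⟨q, (Finset.mem_filter.1 hq).1, rfl⟩

lemma fresh_attr {S' : Finset Rule} {α : Finset (ℕ × Option ℕ)} {a : ℕ}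
    (ha : a ∈ attrs (restrict S' α)) : ∀ v, (a, v) ∉ α := by
  intro v hv
  obtain ⟨s, hs, hxs⟩ := Finset.mem_biUnion.1 ha
  obtain ⟨r, hr, rfl⟩ := Finset.mem_image.1 hs
  obtain ⟨hrS, hrc⟩ := Finset.mem_filter.1 hr
  simp only [Rule.attrs, Rule.restrict] at hxs
  obtain ⟨q, hq, rfl⟩ := Finset.mem_image.1 hxs
  obtain ⟨hqK, hqn⟩ := Finset.mem_filter.1 hq
  have h1 : ((q.1, some q.2) : ℕ × Option ℕ) ∈ liftK r.K ∪ α :=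
    Finset.mem_union_left _ (mem_liftK.2 ⟨q.2, by rw [Prod.mk.eta]; exact hqK, rfl⟩)
  have h2 : ((q.1, v) : ℕ × Option ℕ) ∈ liftK r.K ∪ α := Finset.mem_union_right _ hv
  have heq := hrc _ h1 _ h2 rfl
  simp only at heq
  rw [← heq] at hv
  exact hqn hv

lemma len_restrict_zero {r : Rule} {α : Finset (ℕ × Option ℕ)}
    (h : (r.restrict α).len = 0) : liftK r.K ⊆ α := by
  intro q hq
  rcases mem_liftK.1 hq with ⟨δ, hδ, hq2⟩
  unfold Rule.restrict Rule.len at h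
  rw [Finset.card_eq_zero, Finset.filter_eq_empty_iff] at h
  have hmem := h hδ
  simp only [not_not] at hmem
  obtain ⟨q1, q2⟩ := q
  simp only at hq2 hmem
  rw [hq2]
  exact hmem

lemma restrict_len_mono {r : Rule} {α α' : Finset (ℕ × Option ℕ)} (h : α ⊆ α') :
    (r.restrict α').len ≤ (r.restrict α).len := by
  apply Finset.card_le_card
  apply Finset.monotone_filter_right
  intro p _ hp hmem
  exact hp (h hmem)

lemma phase_lemma {S' : Finset Rule} {α α' : Finset (ℕ × Option ℕ)} (hsub : α ⊆ α')
    (hcons' : ConsistentE α') {B : Finset ℕ}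
    (hcover : IsNodeCover (Splus (I_AD (restrict S' α))) B)
    (hass : ∀ a ∈ B, ∃ v, (a, v) ∈ α')
    (hD : 0 < dPar (I_AD (restrict S' α))) :
    dPar (I_AD (restrict S' α')) < dPar (I_AD (restrict S' α)) := by
  set D := dPar (I_AD (restrict S' α)) with hDdef
  have hDpos : (⊥ : ℕ) < D := hD
  rw [dPar, Finset.sup_lt_iff hDpos]
  intro s hs
  obtain ⟨hsmem, hcond⟩ := Finset.mem_filter.1 hs
  obtain ⟨r, hr, rfl⟩ := Finset.mem_image.1 hsmem
  obtain ⟨hrS, hrc'⟩ := Finset.mem_filter.1 hr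
  have hrc : ConsistentE (liftK r.K ∪ α) :=
    consistentE_of_subset (Finset.union_subset_union subset_rfl hsub) hrc'
  have hrα : r.restrict α ∈ restrict S' α :=
    Finset.mem_image.2 ⟨r, Finset.mem_filter.2 ⟨hrS, hrc⟩, rfl⟩
  have hlen_mono : (r.restrict α').len ≤ (r.restrict α).len := restrict_len_mono hsub
  by_cases hIA : r.restrict α ∈ I_AD (restrict S' α)
  · by_cases hlen : (r.restrict α).len = D
    · have hplus : r.restrict α ∈ Splus (I_AD (restrict S' α)) :=
        Finset.mem_filter.2 ⟨hIA, hlen⟩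
      have hattr_ne : (r.restrict α).attrs.Nonempty := by
        rw [Rule.attrs, Finset.image_nonempty, ← Finset.card_pos]
        show 0 < (r.restrict α).len
        omega
      obtain ⟨x, hx⟩ := hcover.2 _ hplus hattr_ne
      obtain ⟨hx1, hx2⟩ := Finset.mem_inter.1 hx
      simp only [Rule.attrs, Rule.restrict] at hx1
      obtain ⟨q, hq, rfl⟩ := Finset.mem_image.1 hx1
      obtain ⟨hqK, hqn⟩ := Finset.mem_filter.1 hq
      obtain ⟨v, hvα'⟩ := hass _ hx2
      have h1 : ((q.1, some q.2) : ℕ × Option ℕ) ∈ liftK r.K ∪ α' :=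
        Finset.mem_union_left _ (mem_liftK.2 ⟨q.2, by rw [Prod.mk.eta]; exact hqK, rfl⟩)
      have h2 : ((q.1, v) : ℕ × Option ℕ) ∈ liftK r.K ∪ α' := Finset.mem_union_right _ hvα'
      have heq := hrc' _ h1 _ h2 rfl
      simp only at heq
      rw [← heq] at hvα'
      have hstrict : (r.restrict α').len < (r.restrict α).len := by
        apply Finset.card_lt_card
        refine ⟨Finset.monotone_filter_right _ (fun p _ hp hmem => hp (hsub hmem)), ?_⟩
        intro hss
        have hqmem : q ∈ r.K.filter (fun p => (p.1, some p.2) ∉ α) :=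
          Finset.mem_filter.2 ⟨hqK, hqn⟩
        have := Finset.mem_filter.1 (hss hqmem)
        exact this.2 hvα'
      omega
    · have hle : (r.restrict α).len ≤ D := Finset.le_sup (f := Rule.len) hIA
      omega
  · have hnot : ¬((r.restrict α).len = 0 ∨ (r.restrict α).rhs ∉ D0 (restrict S' α)) :=
      fun h => hIA (Finset.mem_filter.2 ⟨hrα, h⟩)
    push_neg at hnot
    obtain ⟨hlen0, hD0⟩ := hnot
    obtain ⟨s4, hs4, hs4rhs⟩ := Finset.mem_image.1 hD0
    obtain ⟨hs4mem, hs4len⟩ := Finset.mem_filter.1 hs4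
    obtain ⟨r4, hr4, rfl⟩ := Finset.mem_image.1 hs4mem
    obtain ⟨hr4S, hr4c⟩ := Finset.mem_filter.1 hr4
    have hsub4 : liftK r4.K ⊆ α := len_restrict_zero hs4len
    have hr4c' : ConsistentE (liftK r4.K ∪ α') := by
      rw [Finset.union_eq_right.2 (hsub4.trans hsub)]
      exact hcons'
    have hr4len' : (r4.restrict α').len = 0 := by
      have := restrict_len_mono (r := r4) hsub
      omega
    have hmemD0' : (r.restrict α').rhs ∈ D0 (restrict S' α') := by
      refine Finset.mem_image.2 ⟨r4.restrict α', Finset.mem_filter.2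
        ⟨Finset.mem_image.2 ⟨r4, Finset.mem_filter.2 ⟨hr4S, hr4c'⟩, rfl⟩, hr4len'⟩, ?_⟩
      show r4.rhs = r.rhs
      exact hs4rhs
    rcases hcond with h | h
    · rw [h]
      exact hD
    · exact absurd hmemD0' h

-- ### normalization and the terminal condition

def normv (S' : Finset Rule) (a : ℕ) (l : Option ℕ) : Option ℕ :=
  if ∃ δ, l = some δ ∧ δ ∈ VS S' a then l else none

def normImage (S' : Finset Rule) (E : Finset (ℕ × Option ℕ)) : Finset (ℕ × Option ℕ) :=
  E.image fun p => (p.1, normv S' p.1 p.2)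

def ZofS (S : Finset Rule) (α : Finset (ℕ × Option ℕ)) : Finset Rule :=
  S.filter fun r => liftK r.K ⊆ α

lemma normv_mem_allowed (S' : Finset Rule) (a : ℕ) (l : Option ℕ) :
    normv S' a l ∈ allowed S' true a := by
  unfold normv
  split
  · rename_i hmem
    obtain ⟨δ, rfl, hδ⟩ := hmem
    exact Finset.mem_union_left _ (Finset.mem_image.2 ⟨δ, hδ, rfl⟩)
  · exact none_mem_allowed S' a

lemma normv_eq_some {S' : Finset Rule} {a : ℕ} {l : Option ℕ} {δ : ℕ}
    (h : normv S' a l = some δ) : l = some δ := by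
  unfold normv at h
  split at h
  · exact h
  · simp at h

lemma normv_of_mem {S' : Finset Rule} {a δ : ℕ} (h : δ ∈ VS S' a) :
    normv S' a (some δ) = some δ := by
  unfold normv
  rw [if_pos ⟨δ, rfl, h⟩]

lemma normImage_insert (S' : Finset Rule) (a : ℕ) (l : Option ℕ)
    (E : Finset (ℕ × Option ℕ)) :
    normImage S' (insert (a, l) E) = insert (a, normv S' a l) (normImage S' E) := by
  unfold normImage
  rw [Finset.image_insert]

lemma normImage_consistent {S' : Finset Rule} {E : Finset (ℕ × Option ℕ)}
    (hE : ConsistentE E) : ConsistentE (normImage S' E) := by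
  intro p hp q hq hfst
  obtain ⟨p0, hp0, rfl⟩ := Finset.mem_image.1 hp
  obtain ⟨q0, hq0, rfl⟩ := Finset.mem_image.1 hq
  simp only at hfst ⊢
  rw [hfst, hE p0 hp0 q0 hq0 hfst]

lemma normImage_some_mem {S' : Finset Rule} {E : Finset (ℕ × Option ℕ)} {a δ : ℕ}
    (h : ((a, some δ) : ℕ × Option ℕ) ∈ normImage S' E) : ((a, some δ) : ℕ × Option ℕ) ∈ E := by
  obtain ⟨p0, hp0, heq⟩ := Finset.mem_image.1 h
  have h1 : p0.1 = a := congrArg Prod.fst heq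
  have h2 : normv S' p0.1 p0.2 = some δ := congrArg Prod.snd heq
  have h3 : p0.2 = some δ := normv_eq_some h2
  obtain ⟨a0, l0⟩ := p0
  simp only at h1 h3
  rw [← h1, ← h3]
  exact hp0

lemma terminal_lemma {S : Finset Rule} (hwf : ∀ r ∈ S, r.WF)
    {α E : Finset (ℕ × Option ℕ)} (hrel : α = normImage (R_AD S) E)
    (hd0 : dPar (I_AD (restrict (R_AD S) α)) = 0) (hE : ConsistentE E) :
    LeafCond S (ZofS S α) E := by
  have hαcons : ConsistentE α := by
    rw [hrel]
    exact normImage_consistent hE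
  have hsomeE : ∀ q ∈ α, ∀ δ : ℕ, q.2 = some δ → q ∈ E := by
    intro q hq δ hq2
    obtain ⟨q1, q2⟩ := q
    simp only at hq2
    rw [hrel] at hq
    rw [hq2] at hq ⊢
    exact normImage_some_mem hq
  constructor
  · intro r hr q hq
    have hsub := (Finset.mem_filter.1 hr).2
    have hqα := hsub hq
    rcases mem_liftK.1 hq with ⟨δ, hδ, hq2⟩
    exact hsomeE q hqα δ hq2
  · intro r hrS hrZ hrrhs hc
    obtain ⟨r3, hr3S', hr3K, hr3rhs⟩ := exists_RAD_le r hrS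
    have hr3S : r3 ∈ S := Finset.filter_subset _ _ hr3S'
    have hr3E : ConsistentE (liftK r3.K ∪ E) :=
      consistentE_of_subset (Finset.union_subset_union (liftK_mono hr3K) subset_rfl) hc
    have hr3α : ConsistentE (liftK r3.K ∪ α) := by
      refine consistentE_union (liftK_consistent (hwf r3 hr3S)) hαcons ?_
      intro q hq q' hq' hfst
      rcases mem_liftK.1 hq with ⟨δ, hδ, hq2⟩
      rw [hrel] at hq'
      obtain ⟨p0, hp0, rfl⟩ := Finset.mem_image.1 hq'
      simp only at hfst ⊢
      have hqE := hr3E q (Finset.mem_union_left _ hq) p0 (Finset.mem_union_right _ hp0) hfst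
      rw [hq2] at hqE
      rw [← hqE, normv_of_mem]
      · exact hq2
      · rw [← hfst]
        exact mem_VS_of_mem hr3S' hδ
    have hZmem : ∀ r4 : Rule, r4 ∈ R_AD S → liftK r4.K ⊆ α → r4.rhs ∈ (ZofS S α).image Rule.rhs := by
      intro r4 hr4 hsub4
      exact Finset.mem_image.2 ⟨r4, Finset.mem_filter.2
        ⟨Finset.filter_subset _ _ hr4, hsub4⟩, rfl⟩
    have hr3mem : r3.restrict α ∈ restrict (R_AD S) α :=
      Finset.mem_image.2 ⟨r3, Finset.mem_filter.2 ⟨hr3S', hr3α⟩, rfl⟩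
    by_cases hlen3 : (r3.restrict α).len = 0
    · have := hZmem r3 hr3S' (len_restrict_zero hlen3)
      rw [hr3rhs] at this
      exact hrrhs this
    · by_cases hIA : r3.restrict α ∈ I_AD (restrict (R_AD S) α)
      · have hle : (r3.restrict α).len ≤ dPar (I_AD (restrict (R_AD S) α)) :=
          Finset.le_sup (f := Rule.len) hIA
        omega
      · have hnot : ¬((r3.restrict α).len = 0 ∨
            (r3.restrict α).rhs ∉ D0 (restrict (R_AD S) α)) :=
          fun h => hIA (Finset.mem_filter.2 ⟨hr3mem, h⟩)
        push_neg at hnot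
        obtain ⟨_, hD0⟩ := hnot
        obtain ⟨s4, hs4, hs4rhs⟩ := Finset.mem_image.1 hD0
        obtain ⟨hs4mem, hs4len⟩ := Finset.mem_filter.1 hs4
        obtain ⟨r4, hr4, rfl⟩ := Finset.mem_image.1 hs4mem
        obtain ⟨hr4S, hr4c⟩ := Finset.mem_filter.1 hr4
        have := hZmem r4 hr4S (len_restrict_zero hs4len)
        have hrr : r4.rhs = r.rhs := by
          have : (r4.restrict α).rhs = (r3.restrict α).rhs := hs4rhs
          show r4.rhs = r.rhs
          rw [← hr3rhs]
          exact this
        rw [hrr] at this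
        exact hrrhs this

-- ### the greedy tree builder

def goB (S : Finset Rule) (next : Finset (ℕ × Option ℕ) → LTree) :
    List ℕ → Finset (ℕ × Option ℕ) → LTree
  | [], α => next α
  | a :: B, α => .node a (((allowed S true a).toList).map
      fun l => (l, goB S next B (insert (a, normv (R_AD S) a l) α)))

def buildPhase (S : Finset Rule) : ℕ → Finset (ℕ × Option ℕ) → LTree
  | 0, α => .leaf (ZofS S α)
  | fuel + 1, α =>
    if dPar (I_AD (restrict (R_AD S) α)) = 0 then .leaf (ZofS S α)
    else goB S (buildPhase S fuel)
      (minCover (Splus (I_AD (restrict (R_AD S) α)))).toList α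

lemma htGo_le {kids : List (Option ℕ × LTree)} {c : ℕ}
    (h : ∀ p ∈ kids, ht p.2 ≤ c) : htGo kids ≤ c := by
  induction kids with
  | nil => simp [htGo]
  | cons hd rest ih =>
    obtain ⟨l0, t0⟩ := hd
    simp only [htGo]
    refine max_le (h (l0, t0) (List.mem_cons_self)) (ih ?_)
    intro p hp
    exact h p (List.mem_cons_of_mem _ hp)

lemma beta_EADplus_mem_le (S' : Finset Rule) {α : Finset (ℕ × Option ℕ)}
    (hα : α ∈ ESys S' true) :
    betaPlus (I_AD (restrict S' α)) ≤ beta_EADplus S' := by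
  have hbdd : BddAbove {b | ∃ α ∈ ESys S' true, betaPlus (I_AD (restrict S' α)) = b} := by
    refine ⟨(attrs S').card, ?_⟩
    rintro b ⟨α', hα', rfl⟩
    calc betaPlus (I_AD (restrict S' α'))
        ≤ (attrs (Splus (I_AD (restrict S' α')))).card := beta_le_card_attrs _
      _ ≤ (attrs S').card := by
          apply Finset.card_le_card
          refine Finset.Subset.trans (attrs_mono (Finset.filter_subset _ _)) ?_
          refine Finset.Subset.trans (attrs_mono (Finset.filter_subset _ _)) ?_
          exact attrs_restrict_subset S' α'
  exact le_csSup hbdd ⟨α, hα, rfl⟩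

theorem go_ok (S : Finset Rule) (next : Finset (ℕ × Option ℕ) → LTree) (c : ℕ)
    (Q : Finset (ℕ × Option ℕ) → Prop)
    (hnext : ∀ α', ConsistentE α' →
        (∀ p ∈ α', p.1 ∈ attrs (R_AD S) ∧ p.2 ∈ allowed (R_AD S) true p.1) → Q α' →
        WFT S (next α') ∧ ht (next α') ≤ c ∧
        ∀ E', α' = normImage (R_AD S) E' → Ok S (next α') E') :
    ∀ (B : List ℕ) (α : Finset (ℕ × Option ℕ)),
    B.Nodup → (∀ a ∈ B, a ∈ attrs (R_AD S)) →
    (∀ a ∈ B, ∀ v, ((a, v) : ℕ × Option ℕ) ∉ α) →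
    ConsistentE α → (∀ p ∈ α, p.1 ∈ attrs (R_AD S) ∧ p.2 ∈ allowed (R_AD S) true p.1) →
    (∀ α'', ConsistentE α'' → α ⊆ α'' → (∀ a ∈ B, ∃ v, ((a, v) : ℕ × Option ℕ) ∈ α'') →
      Q α'') →
    WFT S (goB S next B α) ∧ ht (goB S next B α) ≤ B.length + c ∧
    ∀ E, α = normImage (R_AD S) E → Ok S (goB S next B α) E := by
  intro B
  induction B with
  | nil =>
    intro α _ _ _ hcons hdom hQ
    have := hnext α hcons hdom (hQ α hcons subset_rfl (by simp))
    simpa [goB] using this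
  | cons a B' ih =>
    intro α hnd hattr hfresh hcons hdom hQ
    simp only [List.nodup_cons] at hnd
    have haR : a ∈ attrs (R_AD S) := hattr a (List.mem_cons_self)
    have haS : a ∈ attrs S := attrs_mono (Finset.filter_subset _ _) haR
    set kids := ((allowed S true a).toList).map
      (fun l => (l, goB S next B' (insert (a, normv (R_AD S) a l) α))) with hkids
    have hmem_decomp : ∀ p ∈ kids,
        p = (p.1, goB S next B' (insert (a, normv (R_AD S) a p.1) α)) ∧
        p.1 ∈ (allowed S true a).toList := by
      intro p hp
      rw [hkids] at hp
      obtain ⟨l, hl, rfl⟩ := List.mem_map.1 hp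
      exact ⟨rfl, hl⟩
    have hrec : ∀ l : Option ℕ,
        WFT S (goB S next B' (insert (a, normv (R_AD S) a l) α)) ∧
        ht (goB S next B' (insert (a, normv (R_AD S) a l) α)) ≤ B'.length + c ∧
        ∀ E, insert (a, normv (R_AD S) a l) α = normImage (R_AD S) E →
          Ok S (goB S next B' (insert (a, normv (R_AD S) a l) α)) E := by
      intro l
      set av := normv (R_AD S) a l with hav
      have hconsi : ConsistentE (insert (a, av) α) := by
        intro p hp q hq hfst
        rcases Finset.mem_insert.1 hp with rfl | hp <;>
          rcases Finset.mem_insert.1 hq with hq' | hq'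
        · rw [hq']
        · exfalso
          exact hfresh a (List.mem_cons_self) q.2 (by
            have : q = ((a : ℕ), q.2) := by
              obtain ⟨q1, q2⟩ := q
              simp only at hfst ⊢
              rw [← hfst]
            rw [← this]
            exact hq')
        · exfalso
          rw [hq'] at hfst
          exact hfresh a (List.mem_cons_self) p.2 (by
            have : p = ((a : ℕ), p.2) := by
              obtain ⟨p1, p2⟩ := p
              simp only at hfst ⊢
              rw [hfst]
            rw [← this]
            exact hp)
        · exact hcons p hp q hq' hfst
      refine ih (insert (a, av) α) hnd.2 (fun x hx => hattr x (List.mem_cons_of_mem _ hx))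
        ?_ hconsi ?_ ?_
      · intro x hx v hv
        rcases Finset.mem_insert.1 hv with heq | hv'
        · have : x = a := congrArg Prod.fst heq
          exact hnd.1 (this ▸ hx)
        · exact hfresh x (List.mem_cons_of_mem _ hx) v hv'
      · intro p hp
        rcases Finset.mem_insert.1 hp with rfl | hp'
        · exact ⟨haR, normv_mem_allowed _ _ _⟩
        · exact hdom p hp'
      · intro α'' hc'' hsub'' hass''
        refine hQ α'' hc'' (subset_trans (Finset.subset_insert _ _) hsub'') ?_
        intro x hx
        rcases List.mem_cons.1 hx with rfl | hx'
        · exact ⟨av, hsub'' (Finset.mem_insert_self _ _)⟩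
        · exact hass'' x hx'
    refine ⟨?_, ?_, ?_⟩
    · show WFT S (.node a kids)
      refine WFT.node haS ?_ ?_
      · rw [hkids, List.map_map]
        have hcompid : (Prod.fst ∘ fun l : Option ℕ =>
            (l, goB S next B' (insert (a, normv (R_AD S) a l) α))) = id := rfl
        rw [hcompid, List.map_id]
      · intro p hp
        obtain ⟨hpe, hpl⟩ := hmem_decomp p hp
        rw [hpe]
        exact (hrec p.1).1
    · show ht (.node a kids) ≤ (a :: B').length + c
      have : htGo kids ≤ B'.length + c := by
        apply htGo_le
        intro p hp
        obtain ⟨hpe, hpl⟩ := hmem_decomp p hp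
        rw [hpe]
        exact (hrec p.1).2.1
      simp only [ht, List.length_cons]
      omega
    · intro E hrel
      show Ok S (.node a kids) E
      refine Ok.node ?_
      intro p hp
      obtain ⟨hpe, hpl⟩ := hmem_decomp p hp
      rw [hpe]
      refine (hrec p.1).2.2 (insert (a, p.1) E) ?_
      rw [normImage_insert, ← hrel]

theorem build_ok (S : Finset Rule) (hwf : ∀ r ∈ S, r.WF) :
    ∀ (fuel : ℕ) (α : Finset (ℕ × Option ℕ)),
    ConsistentE α → (∀ p ∈ α, p.1 ∈ attrs (R_AD S) ∧ p.2 ∈ allowed (R_AD S) true p.1) →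
    dPar (I_AD (restrict (R_AD S) α)) ≤ fuel →
    WFT S (buildPhase S fuel α) ∧
    ht (buildPhase S fuel α) ≤ fuel * beta_EADplus (R_AD S) ∧
    ∀ E, α = normImage (R_AD S) E → Ok S (buildPhase S fuel α) E := by
  intro fuel
  induction fuel with
  | zero =>
    intro α hcons hdom hd
    have hd0 : dPar (I_AD (restrict (R_AD S) α)) = 0 := by omega
    refine ⟨WFT.leaf (Finset.filter_subset _ _), by simp [ht, buildPhase], ?_⟩
    intro E hrel
    exact Ok.leaf (fun hE => terminal_lemma hwf hrel hd0 hE)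
  | succ fuel ih =>
    intro α hcons hdom hd
    by_cases hd0 : dPar (I_AD (restrict (R_AD S) α)) = 0
    · rw [show buildPhase S (fuel + 1) α = .leaf (ZofS S α) by
        simp [buildPhase, hd0]]
      refine ⟨WFT.leaf (Finset.filter_subset _ _), by simp [ht], ?_⟩
      intro E hrel
      exact Ok.leaf (fun hE => terminal_lemma hwf hrel hd0 hE)
    · rw [show buildPhase S (fuel + 1) α = goB S (buildPhase S fuel)
          (minCover (Splus (I_AD (restrict (R_AD S) α)))).toList α by
        simp [buildPhase, hd0]]
      set T := I_AD (restrict (R_AD S) α) with hT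
      set B := minCover (Splus T) with hB
      have hcover := (minCover_spec (Splus T)).1
      have hcard := (minCover_spec (Splus T)).2
      have hBattrs : ∀ a ∈ B, a ∈ attrs (R_AD S) := by
        intro a ha
        have h1 := hcover.1 ha
        have h2 : attrs (Splus T) ⊆ attrs (R_AD S) := by
          refine Finset.Subset.trans (attrs_mono (Finset.filter_subset _ _)) ?_
          refine Finset.Subset.trans (attrs_mono (Finset.filter_subset _ _)) ?_
          exact attrs_restrict_subset _ α
        exact h2 h1
      have hBfresh : ∀ a ∈ B, ∀ v, ((a, v) : ℕ × Option ℕ) ∉ α := by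
        intro a ha
        have h1 := hcover.1 ha
        have h2 : attrs (Splus T) ⊆ attrs (restrict (R_AD S) α) := by
          refine Finset.Subset.trans (attrs_mono (Finset.filter_subset _ _)) ?_
          exact attrs_mono (Finset.filter_subset _ _)
        exact fresh_attr (h2 h1)
      have hQfin : ∀ α'', ConsistentE α'' → α ⊆ α'' →
          (∀ a ∈ B.toList, ∃ v, ((a, v) : ℕ × Option ℕ) ∈ α'') →
          dPar (I_AD (restrict (R_AD S) α'')) ≤ fuel := by
        intro α'' hc'' hsub'' hass''
        have hlt := phase_lemma (S' := R_AD S) hsub'' hc'' hcover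
          (fun a ha => hass'' a (Finset.mem_toList.2 ha))
          (by rw [← hT]; exact Nat.pos_of_ne_zero hd0)
        rw [← hT] at hlt
        omega
      obtain ⟨hw, hh, ho⟩ := go_ok S (buildPhase S fuel) (fuel * beta_EADplus (R_AD S))
        (fun α'' => dPar (I_AD (restrict (R_AD S) α'')) ≤ fuel)
        (fun α' hc' hdom' hQ' => ih α' hc' hdom' hQ')
        B.toList α (Finset.nodup_toList _)
        (fun a ha => hBattrs a (Finset.mem_toList.1 ha))
        (fun a ha => hBfresh a (Finset.mem_toList.1 ha))
        hcons hdom hQfin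
      refine ⟨hw, ?_, ho⟩
      have hlenB : B.toList.length = betaPlus T := by
        rw [Finset.length_toList, hcard]
        rfl
      have hle : betaPlus T ≤ beta_EADplus (R_AD S) := by
        apply beta_EADplus_mem_le
        exact ⟨hcons, hdom⟩
      calc ht _ ≤ B.toList.length + fuel * beta_EADplus (R_AD S) := hh
        _ ≤ beta_EADplus (R_AD S) + fuel * beta_EADplus (R_AD S) := by
            rw [hlenB]; omega
        _ = (fuel + 1) * beta_EADplus (R_AD S) := by ring

lemma restrict_empty {S' : Finset Rule} (hwf : ∀ r ∈ S', r.WF) :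
    restrict S' ∅ = S' := by
  unfold restrict
  have hfil : S'.filter (fun r => ConsistentE (liftK r.K ∪ ∅)) = S' := by
    apply Finset.filter_true_of_mem
    intro r hr
    rw [Finset.union_empty]
    exact liftK_consistent (hwf r hr)
  rw [hfil]
  have hid : ∀ r ∈ S', r.restrict ∅ = r := by
    intro r _
    unfold Rule.restrict
    have : r.K.filter (fun p => ((p.1, some p.2) : ℕ × Option ℕ) ∉ (∅ : Finset (ℕ × Option ℕ))) = r.K := by
      apply Finset.filter_true_of_mem
      intro p _
      exact Finset.notMem_empty _
    rw [this]
  rw [Finset.image_congr (fun r hr => hid r (by simpa using hr))]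
  exact Finset.image_id

theorem statement_18_aux (S : Finset Rule) (_hS : S.Nonempty) (hwf : ∀ r ∈ S, r.WF) :
    max (dPar (R_AD S)) (beta_EAD (R_AD S)) ≤ h_EAD S ∧
    h_EAD S ≤ dPar (R_AD S) * beta_EADplus (R_AD S) := by
  have hwf' : ∀ r ∈ R_AD S, r.WF := fun r hr => hwf r (Finset.filter_subset _ _ hr)
  have hd_init : dPar (I_AD (restrict (R_AD S) ∅)) ≤ dPar (R_AD S) := by
    rw [restrict_empty hwf']
    exact dPar_mono (Finset.filter_subset _ _)
  obtain ⟨hWFT, hht, hOkall⟩ := build_ok S hwf (dPar (R_AD S)) ∅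
    consistentE_empty (by simp) hd_init
  have hOk := hOkall ∅ (by simp [normImage])
  obtain ⟨hsolves, hdepth⟩ := LGraph_props S _ hWFT hOk
  constructor
  · have hne : {m | ∃ G : DGraph, TreeSolvesEAD S G ∧ G.depth = m}.Nonempty :=
      ⟨(LGraph (buildPhase S (dPar (R_AD S)) ∅)).depth, _, hsolves, rfl⟩
    show max (dPar (R_AD S)) (beta_EAD (R_AD S)) ≤
      sInf {m | ∃ G : DGraph, TreeSolvesEAD S G ∧ G.depth = m}
    apply le_csInf hne
    rintro m ⟨G, hG, rfl⟩
    exact max_le (LB_d hwf hG) (LB_beta hwf hG)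
  · calc h_EAD S ≤ (LGraph (buildPhase S (dPar (R_AD S)) ∅)).depth :=
        Nat.sInf_le ⟨_, hsolves, rfl⟩
      _ ≤ ht (buildPhase S (dPar (R_AD S)) ∅) := hdepth
      _ ≤ dPar (R_AD S) * beta_EADplus (R_AD S) := hht

end Development

/-- Theorem 4(d): with S′ = R_AD(S),
max{d(S′), β_EAD(S′)} ≤ h_EAD(S) ≤ d(S′)·β_EAD⁺(S′). -/
theorem statement_18 (S : Finset Rule) (hS : S.Nonempty) (hwf : ∀ r ∈ S, r.WF)
    (hn : 0 < nPar S) :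
    max (dPar (R_AD S)) (beta_EAD (R_AD S)) ≤ h_EAD S ∧
    h_EAD S ≤ dPar (R_AD S) * beta_EADplus (R_AD S) :=
  statement_18_aux S hS hwf

end DRS

end
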